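/- arXiv:1511.03998 — 3 statements merged into one kernel-verified Lean document; each statement's English description precedes it below -/
import Mathlib

section
/- The localizable generalized geometric measure of the N-qubit generalized GHZ state under single-qubit projective measurement equals its generalized geometric measure: E_L = min{|a₁|², |a₂|²}. -/
open scoped BigOperators

noncomputable section

namespace QI

/-- A pure state of a collection of qubits indexed by `ι`, given by its
amplitudes in the computational basis. -/
abbrev PureState (ι : Type) := (ι → Fin 2) → ℂ

variable {ι : Type} [Fintype ι] [DecidableEq ι]

/-- Squared norm of a pure state. -/
def nsq (ψ : PureState ι) : ℝ := ∑ x, Complex.normSq (ψ x)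

/-- Normalization of a pure state. -/
def normalize (ψ : PureState ι) : PureState ι :=
  fun x => ψ x / (Real.sqrt (nsq ψ) : ℂ)

/-- Combine configurations of the qubits in `A` and outside `A`. -/
def merge (A : Finset ι) (a : {i // i ∈ A} → Fin 2) (b : {i // i ∉ A} → Fin 2) :
    ι → Fin 2 := fun i => if h : i ∈ A then a ⟨i, h⟩ else b ⟨i, h⟩

/-- Reduced density matrix of the qubits in `A`. -/
def rdm (ψ : PureState ι) (A : Finset ι) :
    ({i // i ∈ A} → Fin 2) → ({i // i ∈ A} → Fin 2) → ℂ :=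
  fun a a' => ∑ b : {i // i ∉ A} → Fin 2, ψ (merge A a b) * star (ψ (merge A a' b))

/-- Maximal eigenvalue of a (Hermitian) matrix, via the Rayleigh quotient. -/
def maxEig {κ : Type} [Fintype κ] (ρ : κ → κ → ℂ) : ℝ :=
  ⨆ v : {v : κ → ℂ // ∑ i, Complex.normSq (v i) = 1},
    (∑ i, ∑ j, star (v.1 i) * ρ i j * v.1 j).re

/-- The generalized geometric measure: one minus the maximal squared Schmidt
coefficient over all nonempty proper bipartitions. -/
def GGM (ψ : PureState ι) : ℝ :=
  1 - ⨆ A : {A : Finset ι // A.Nonempty ∧ A ≠ Finset.univ}, maxEig (rdm ψ A.1)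

/-- Unnormalized post-measurement state on the remaining qubits after obtaining
the outcome corresponding to the basis vector `ξ` in a rank-1 projective
measurement on qubit `r`. -/
def collapse (ψ : PureState ι) (r : ι) (ξ : Fin 2 → ℂ) :
    PureState {i // i ≠ r} :=
  fun b => ∑ v : Fin 2, ξ v * ψ (fun i => if h : i = r then v else b ⟨i, h⟩)

/-- First measurement-basis vector `cos(θ/2)|0⟩ + e^{iφ} sin(θ/2)|1⟩`. -/
def xiUp (θ φ : ℝ) : Fin 2 → ℂ :=
  ![(Real.cos (θ/2) : ℂ), Complex.exp (φ * Complex.I) * (Real.sin (θ/2) : ℂ)]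

/-- Second measurement-basis vector `-e^{-iφ} sin(θ/2)|0⟩ + cos(θ/2)|1⟩`. -/
def xiDn (θ φ : ℝ) : Fin 2 → ℂ :=
  ![-(Complex.exp (-(φ * Complex.I))) * (Real.sin (θ/2) : ℂ), (Real.cos (θ/2) : ℂ)]

/-- Average post-measurement GGM for the projective measurement `(θ, φ)` on
qubit `r`. -/
def avgGGM (ψ : PureState ι) (r : ι) (θ φ : ℝ) : ℝ :=
  nsq (collapse ψ r (xiUp θ φ)) * GGM (normalize (collapse ψ r (xiUp θ φ))) +
  nsq (collapse ψ r (xiDn θ φ)) * GGM (normalize (collapse ψ r (xiDn θ φ)))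

/-- The localizable generalized geometric measure for single-qubit projective
measurement on qubit `r`. -/
def LGGM (ψ : PureState ι) (r : ι) : ℝ :=
  sSup {E | ∃ θ ∈ Set.Icc 0 Real.pi, ∃ φ ∈ Set.Ico 0 (2 * Real.pi),
    E = avgGGM ψ r θ φ}

/-- The generalized GHZ state `a₁|0…0⟩ + a₂|1…1⟩`. -/
def ghz (a1 a2 : ℂ) : PureState ι :=
  fun x => if x = fun _ => 0 then a1 else if x = fun _ => 1 then a2 else 0

/-- Computational basis vector with a single `1` at position `i`. -/
def basisVec (i : ι) : ι → Fin 2 := fun j => if j = i then 1 else 0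

/-- The generalized W state `Σᵢ aᵢ |0…1ᵢ…0⟩`. -/
def wState (a : ι → ℂ) : PureState ι :=
  fun x => ∑ i, if x = basisVec i then a i else 0

/-- The Dicke state with `k` excitations: equal superposition of all
computational basis states with exactly `k` ones. -/
def dicke (k : ℕ) : PureState ι :=
  fun x => if (∑ i, ((x i : ℕ))) = k
    then ((1 / Real.sqrt ((Fintype.card ι).choose k) : ℝ) : ℂ) else 0

set_option linter.unusedSectionVars false

section AuxLemmas

variable {ι : Type} [Fintype ι] [DecidableEq ι]

lemma zero_ne_one_fun [Nonempty ι] : (fun _ : ι => (0 : Fin 2)) ≠ (fun _ => 1) := by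
  intro h
  exact absurd (congrFun h (Classical.arbitrary ι)) (by decide)

lemma nsq_ghz [Nonempty ι] (a1 a2 : ℂ) :
    nsq (ghz a1 a2 : PureState ι) = Complex.normSq a1 + Complex.normSq a2 := by
  classical
  unfold nsq ghz
  rw [← Finset.sum_subset
      (Finset.subset_univ ({(fun _ : ι => (0 : Fin 2)), fun _ => 1} : Finset (ι → Fin 2)))]
  · rw [Finset.sum_pair (zero_ne_one_fun (ι := ι))]
    rw [if_pos rfl, if_neg (zero_ne_one_fun (ι := ι)).symm, if_pos rfl]
  · intro x _ hx
    simp only [Finset.mem_insert, Finset.mem_singleton, not_or] at hx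
    rw [if_neg hx.1, if_neg hx.2, Complex.normSq_zero]

lemma insert_eq_const (r : ι) (v : Fin 2) (b : {i // i ≠ r} → Fin 2) (c : Fin 2) :
    (fun i => if h : i = r then v else b ⟨i, h⟩) = (fun _ => c) ↔
      v = c ∧ b = fun _ => c := by
  constructor
  · intro h
    have h1 := congrFun h r
    rw [dif_pos rfl] at h1
    refine ⟨h1, funext fun i => ?_⟩
    have h2 := congrFun h i.1
    rw [dif_neg i.2] at h2
    exact h2
  · rintro ⟨rfl, rfl⟩
    funext i
    split <;> rfl

lemma collapse_ghz (r : ι) [Nonempty {i // i ≠ r}] (a1 a2 : ℂ) (ξ : Fin 2 → ℂ) :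
    collapse (ghz a1 a2 : PureState ι) r ξ = ghz (ξ 0 * a1) (ξ 1 * a2) := by
  funext b
  have hne := zero_ne_one_fun (ι := {i // i ≠ r})
  have h10 : (1 : Fin 2) ≠ 0 := by decide
  have h01 : (0 : Fin 2) ≠ 1 := by decide
  unfold collapse ghz
  rw [Fin.sum_univ_two]
  simp only [insert_eq_const]
  by_cases hb0 : b = fun _ => 0
  · subst hb0
    simp [hne, hne.symm, h10, h01]
  · by_cases hb1 : b = fun _ => 1
    · subst hb1
      simp [hne, hne.symm, h10, h01]
    · simp [hb0, hb1]

lemma normalize_ghz (a1 a2 : ℂ) :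
    normalize (ghz a1 a2 : PureState ι) =
      ghz (a1 / (Real.sqrt (nsq (ghz a1 a2 : PureState ι)) : ℂ))
          (a2 / (Real.sqrt (nsq (ghz a1 a2 : PureState ι)) : ℂ)) := by
  funext x
  unfold normalize ghz
  split_ifs <;> simp

end AuxLemmas

section AuxLemmas2

variable {ι : Type} [Fintype ι] [DecidableEq ι]

lemma merge_eq_const (A : Finset ι) (a : {i // i ∈ A} → Fin 2)
    (b : {i // i ∉ A} → Fin 2) (c : Fin 2) :
    merge A a b = (fun _ => c) ↔ (a = fun _ => c) ∧ (b = fun _ => c) := by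
  constructor
  · intro h
    constructor
    · funext i
      have h2 := congrFun h i.1
      simp only [merge] at h2
      rw [dif_pos i.2] at h2
      exact h2
    · funext i
      have h2 := congrFun h i.1
      simp only [merge] at h2
      rw [dif_neg i.2] at h2
      exact h2
  · rintro ⟨ha, hb⟩
    funext i
    simp only [merge]
    split
    · exact congrFun ha _
    · exact congrFun hb _

lemma rdm_ghz (b1 b2 : ℂ) (A : Finset ι)
    [Nonempty {i // i ∈ A}] [Nonempty {i // i ∉ A}] :
    rdm (ghz b1 b2 : PureState ι) A = fun a a' =>
      if a = (fun _ => 0) ∧ a' = (fun _ => 0) then (Complex.normSq b1 : ℂ)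
      else if a = (fun _ => 1) ∧ a' = (fun _ => 1) then (Complex.normSq b2 : ℂ)
      else 0 := by
  classical
  have hneA := zero_ne_one_fun (ι := {i // i ∈ A})
  have hneB := zero_ne_one_fun (ι := {i // i ∉ A})
  funext a a'
  unfold rdm ghz
  simp only [merge_eq_const]
  by_cases ha0 : a = fun _ => 0 <;> by_cases ha1 : a = fun _ => 1 <;>
    by_cases ha'0 : a' = fun _ => 0 <;> by_cases ha'1 : a' = fun _ => 1
  · exact absurd (ha0 ▸ ha1) hneA
  · exact absurd (ha0 ▸ ha1) hneA
  · exact absurd (ha0 ▸ ha1) hneA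
  · exact absurd (ha0 ▸ ha1) hneA
  · exact absurd (ha'0 ▸ ha'1) hneA
  · subst ha0; subst ha'0
    simp [hneA, hneA.symm, hneB, hneB.symm, Finset.sum_ite_eq',
      Complex.mul_conj]
  · subst ha0; subst ha'1
    rw [if_neg (fun hc => hneA hc.2.symm), if_neg (fun hc => hneA hc.1)]
    rw [Finset.sum_eq_zero]
    intro b _
    by_cases hb0 : b = fun _ => 0 <;> by_cases hb1 : b = fun _ => 1 <;>
      simp [hb0, hb1, hneA, hneA.symm, hneB, hneB.symm]
  · subst ha0
    rw [if_neg (fun hc => ha'0 hc.2), if_neg (fun hc => hneA hc.1)]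
    rw [Finset.sum_eq_zero]
    intro b _
    by_cases hb0 : b = fun _ => 0 <;> by_cases hb1 : b = fun _ => 1 <;>
      simp [hb0, hb1, ha'0, ha'1, hneA, hneA.symm, hneB, hneB.symm]
  · exact absurd (ha'0 ▸ ha'1) hneA
  · subst ha1; subst ha'0
    rw [if_neg (fun hc => hneA hc.1.symm), if_neg (fun hc => hneA hc.2)]
    rw [Finset.sum_eq_zero]
    intro b _
    by_cases hb0 : b = fun _ => 0 <;> by_cases hb1 : b = fun _ => 1 <;>
      simp [hb0, hb1, hneA, hneA.symm, hneB, hneB.symm]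
  · subst ha1; subst ha'1
    simp [hneA, hneA.symm, hneB, hneB.symm, Finset.sum_ite_eq',
      Complex.mul_conj]
  · subst ha1
    rw [if_neg (fun hc => hneA hc.1.symm), if_neg (fun hc => ha'1 hc.2)]
    rw [Finset.sum_eq_zero]
    intro b _
    by_cases hb0 : b = fun _ => 0 <;> by_cases hb1 : b = fun _ => 1 <;>
      simp [hb0, hb1, ha'0, ha'1, hneA, hneA.symm, hneB, hneB.symm]
  · exact absurd (ha'0 ▸ ha'1) hneA
  · subst ha'0
    rw [if_neg (fun hc => ha0 hc.1), if_neg (fun hc => hneA hc.2)]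
    rw [Finset.sum_eq_zero]
    intro b _
    by_cases hb0 : b = fun _ => 0 <;> by_cases hb1 : b = fun _ => 1 <;>
      simp [hb0, hb1, ha0, ha1, hneA, hneA.symm, hneB, hneB.symm]
  · subst ha'1
    rw [if_neg (fun hc => ha0 hc.1), if_neg (fun hc => ha1 hc.1)]
    rw [Finset.sum_eq_zero]
    intro b _
    by_cases hb0 : b = fun _ => 0 <;> by_cases hb1 : b = fun _ => 1 <;>
      simp [hb0, hb1, ha0, ha1, hneA, hneA.symm, hneB, hneB.symm]
  · rw [if_neg (fun hc => ha0 hc.1), if_neg (fun hc => ha1 hc.1)]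
    rw [Finset.sum_eq_zero]
    intro b _
    by_cases hb0 : b = fun _ => 0 <;> by_cases hb1 : b = fun _ => 1 <;>
      simp [hb0, hb1, ha0, ha1, ha'0, ha'1]

end AuxLemmas2

section AuxLemmas3

lemma star_mul_real_mul (z : ℂ) (r : ℝ) :
    star z * (r : ℂ) * z = ((r * Complex.normSq z : ℝ) : ℂ) := by
  have : star z * (r : ℂ) * z = (r : ℂ) * (z * (starRingEnd ℂ) z) := by
    rw [Complex.star_def]; ring
  rw [this, Complex.mul_conj, ← Complex.ofReal_mul]

lemma maxEig_diag_pair {κ : Type} [Fintype κ] [DecidableEq κ] (k0 k1 : κ)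
    (hk : k0 ≠ k1) (X Y : ℝ) (hX : 0 ≤ X) (hY : 0 ≤ Y) :
    maxEig (fun i j => if i = k0 ∧ j = k0 then (X : ℂ)
      else if i = k1 ∧ j = k1 then (Y : ℂ) else 0) = max X Y := by
  classical
  set ρ : κ → κ → ℂ := fun i j => if i = k0 ∧ j = k0 then (X : ℂ)
      else if i = k1 ∧ j = k1 then (Y : ℂ) else 0 with hρ
  have key : ∀ v : κ → ℂ,
      (∑ i, ∑ j, star (v i) * ρ i j * v j).re
        = X * Complex.normSq (v k0) + Y * Complex.normSq (v k1) := by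
    intro v
    have h1 : ∀ i, (∑ j, star (v i) * ρ i j * v j)
        = (if i = k0 then star (v k0) * (X : ℂ) * v k0 else 0)
          + (if i = k1 then star (v k1) * (Y : ℂ) * v k1 else 0) := by
      intro i
      by_cases h0 : i = k0
      · subst h0
        rw [if_pos rfl, if_neg hk, add_zero]
        rw [Finset.sum_eq_single i]
        · simp [hρ]
        · intro j _ hj
          simp [hρ, hj, hk]
        · simp
      · by_cases hone : i = k1
        · subst hone
          rw [if_neg h0, if_pos rfl, zero_add]
          rw [Finset.sum_eq_single i]
          · simp [hρ, h0]
          · intro j _ hj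
            simp [hρ, hj, h0]
          · simp
        · rw [if_neg h0, if_neg hone, add_zero]
          exact Finset.sum_eq_zero (fun j _ => by simp [hρ, h0, hone])
    calc (∑ i, ∑ j, star (v i) * ρ i j * v j).re
        = (∑ i, ((if i = k0 then star (v k0) * (X : ℂ) * v k0 else 0)
            + (if i = k1 then star (v k1) * (Y : ℂ) * v k1 else 0))).re := by
          rw [Finset.sum_congr rfl (fun i _ => h1 i)]
      _ = (star (v k0) * (X : ℂ) * v k0 + star (v k1) * (Y : ℂ) * v k1).re := by
          rw [Finset.sum_add_distrib, Finset.sum_ite_eq' Finset.univ k0,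
            Finset.sum_ite_eq' Finset.univ k1]
          simp
      _ = X * Complex.normSq (v k0) + Y * Complex.normSq (v k1) := by
          rw [star_mul_real_mul, star_mul_real_mul, ← Complex.ofReal_add,
            Complex.ofReal_re]
  have hEig : maxEig ρ = ⨆ v : {v : κ → ℂ // ∑ i, Complex.normSq (v i) = 1},
      X * Complex.normSq (v.1 k0) + Y * Complex.normSq (v.1 k1) := by
    unfold maxEig
    exact iSup_congr (fun v => key v.1)
  have e0 : (∑ i, Complex.normSq ((fun i => if i = k0 then (1:ℂ) else 0) i)) = 1 := by
    simp [apply_ite Complex.normSq, Finset.sum_ite_eq']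
  have e1 : (∑ i, Complex.normSq ((fun i => if i = k1 then (1:ℂ) else 0) i)) = 1 := by
    simp [apply_ite Complex.normSq, Finset.sum_ite_eq']
  have hNE : Nonempty {v : κ → ℂ // ∑ i, Complex.normSq (v i) = 1} :=
    ⟨⟨_, e0⟩⟩
  have hb : ∀ v : {v : κ → ℂ // ∑ i, Complex.normSq (v i) = 1},
      X * Complex.normSq (v.1 k0) + Y * Complex.normSq (v.1 k1) ≤ max X Y := by
    rintro ⟨v, hv⟩
    have hsum : Complex.normSq (v k0) + Complex.normSq (v k1) ≤ 1 := by
      have h2 := Finset.sum_le_sum_of_subset_of_nonneg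
        (Finset.subset_univ ({k0, k1} : Finset κ))
        (fun i _ _ => Complex.normSq_nonneg (v i))
      rwa [Finset.sum_pair hk, hv] at h2
    have hmax : 0 ≤ max X Y := le_trans hX (le_max_left _ _)
    calc X * Complex.normSq (v k0) + Y * Complex.normSq (v k1)
        ≤ max X Y * Complex.normSq (v k0) + max X Y * Complex.normSq (v k1) :=
          add_le_add (mul_le_mul_of_nonneg_right (le_max_left _ _) (Complex.normSq_nonneg _))
            (mul_le_mul_of_nonneg_right (le_max_right _ _) (Complex.normSq_nonneg _))
      _ = max X Y * (Complex.normSq (v k0) + Complex.normSq (v k1)) := by ring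
      _ ≤ max X Y * 1 := mul_le_mul_of_nonneg_left hsum hmax
      _ = max X Y := mul_one _
  have hbdd : BddAbove (Set.range fun v : {v : κ → ℂ // ∑ i, Complex.normSq (v i) = 1} =>
      X * Complex.normSq (v.1 k0) + Y * Complex.normSq (v.1 k1)) := by
    refine ⟨max X Y, ?_⟩
    rintro _ ⟨v, rfl⟩
    exact hb v
  rw [hEig]
  apply le_antisymm
  · exact ciSup_le hb
  · apply max_le
    · have h := le_ciSup hbdd (⟨_, e0⟩ : {v : κ → ℂ // ∑ i, Complex.normSq (v i) = 1})
      simpa [hk.symm] using h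
    · have h := le_ciSup hbdd (⟨_, e1⟩ : {v : κ → ℂ // ∑ i, Complex.normSq (v i) = 1})
      simpa [hk] using h

end AuxLemmas3

section AuxLemmas4

variable {ι : Type} [Fintype ι] [DecidableEq ι]

lemma GGM_ghz (hcard : 2 ≤ Fintype.card ι) (b1 b2 : ℂ) :
    GGM (ghz b1 b2 : PureState ι)
      = 1 - max (Complex.normSq b1) (Complex.normSq b2) := by
  classical
  have hconst : ∀ A : {A : Finset ι // A.Nonempty ∧ A ≠ Finset.univ},
      maxEig (rdm (ghz b1 b2 : PureState ι) A.1)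
        = max (Complex.normSq b1) (Complex.normSq b2) := by
    rintro ⟨A, hA, hA'⟩
    haveI : Nonempty {i // i ∈ A} := ⟨⟨hA.choose, hA.choose_spec⟩⟩
    have hj : ∃ j, j ∉ A := by
      by_contra hc
      push_neg at hc
      exact hA' (Finset.eq_univ_iff_forall.2 hc)
    haveI : Nonempty {i // i ∉ A} := ⟨⟨hj.choose, hj.choose_spec⟩⟩
    rw [rdm_ghz]
    exact maxEig_diag_pair _ _ (zero_ne_one_fun (ι := {i // i ∈ A}))
      _ _ (Complex.normSq_nonneg _) (Complex.normSq_nonneg _)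
  haveI hNE : Nonempty {A : Finset ι // A.Nonempty ∧ A ≠ Finset.univ} := by
    obtain ⟨i0, i1, hii⟩ := Fintype.exists_pair_of_one_lt_card
      (lt_of_lt_of_le one_lt_two hcard)
    refine ⟨⟨{i0}, Finset.singleton_nonempty i0, fun hu => ?_⟩⟩
    have : i1 ∈ ({i0} : Finset ι) := hu ▸ Finset.mem_univ i1
    exact hii (Finset.mem_singleton.1 this).symm
  unfold GGM
  rw [iSup_congr hconst, ciSup_const]

lemma nsq_mul_GGM_ghz (hcard : 2 ≤ Fintype.card ι) (c1 c2 : ℂ) :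
    nsq (ghz c1 c2 : PureState ι) * GGM (normalize (ghz c1 c2 : PureState ι))
      = min (Complex.normSq c1) (Complex.normSq c2) := by
  haveI : Nonempty ι := Fintype.card_pos_iff.1 (by omega)
  have hX := Complex.normSq_nonneg c1
  have hY := Complex.normSq_nonneg c2
  by_cases h0 : Complex.normSq c1 + Complex.normSq c2 = 0
  · have h1 : Complex.normSq c1 = 0 := by linarith
    have h2 : Complex.normSq c2 = 0 := by linarith
    rw [nsq_ghz, h0, zero_mul, h1, h2, min_self]
  · have hpos : 0 < Complex.normSq c1 + Complex.normSq c2 :=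
      lt_of_le_of_ne (by positivity) (Ne.symm h0)
    rw [normalize_ghz, GGM_ghz hcard, nsq_ghz]
    have hsq : Complex.normSq ((Real.sqrt (Complex.normSq c1 + Complex.normSq c2) : ℝ) : ℂ)
        = Complex.normSq c1 + Complex.normSq c2 := by
      rw [Complex.normSq_ofReal, Real.mul_self_sqrt hpos.le]
    rw [Complex.normSq_div, Complex.normSq_div, hsq]
    rcases le_total (Complex.normSq c1) (Complex.normSq c2) with hc | hc
    · rw [min_eq_left hc, max_eq_right ((div_le_div_iff_of_pos_right hpos).2 hc)]
      field_simp
      ring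
    · rw [min_eq_right hc, max_eq_left ((div_le_div_iff_of_pos_right hpos).2 hc)]
      field_simp
      ring

lemma nq_up0 (θ φ : ℝ) : Complex.normSq (xiUp θ φ 0) = Real.cos (θ/2) ^ 2 := by
  have h : xiUp θ φ 0 = ((Real.cos (θ/2) : ℝ) : ℂ) := rfl
  rw [h, Complex.normSq_ofReal, sq]

lemma nq_up1 (θ φ : ℝ) : Complex.normSq (xiUp θ φ 1) = Real.sin (θ/2) ^ 2 := by
  have h : xiUp θ φ 1 = Complex.exp (φ * Complex.I) * ((Real.sin (θ/2) : ℝ) : ℂ) := rfl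
  rw [h, Complex.normSq_mul, Complex.normSq_ofReal, Complex.normSq_eq_norm_sq,
    Complex.norm_exp]
  norm_num [Complex.mul_re, Complex.I_re, Complex.I_im, Complex.ofReal_re,
    Complex.ofReal_im, sq]

lemma nq_dn0 (θ φ : ℝ) : Complex.normSq (xiDn θ φ 0) = Real.sin (θ/2) ^ 2 := by
  have h : xiDn θ φ 0
      = -(Complex.exp (-(φ * Complex.I))) * ((Real.sin (θ/2) : ℝ) : ℂ) := rfl
  rw [h, Complex.normSq_mul, Complex.normSq_neg, Complex.normSq_ofReal,
    Complex.normSq_eq_norm_sq, Complex.norm_exp]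
  norm_num [Complex.mul_re, Complex.I_re, Complex.I_im, Complex.ofReal_re,
    Complex.ofReal_im, sq]

lemma nq_dn1 (θ φ : ℝ) : Complex.normSq (xiDn θ φ 1) = Real.cos (θ/2) ^ 2 := by
  have h : xiDn θ φ 1 = ((Real.cos (θ/2) : ℝ) : ℂ) := rfl
  rw [h, Complex.normSq_ofReal, sq]

end AuxLemmas4

lemma LGGM_ghz_eq (N : ℕ) (hN : 3 ≤ N) (a1 a2 : ℂ) (r : Fin N) :
    LGGM (ghz a1 a2 : PureState (Fin N)) r
      = min (Complex.normSq a1) (Complex.normSq a2) := by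
  have hX := Complex.normSq_nonneg a1
  have hY := Complex.normSq_nonneg a2
  have hcardN : 1 < Fintype.card (Fin N) := by rw [Fintype.card_fin]; omega
  obtain ⟨s, hs⟩ := Fintype.exists_ne_of_one_lt_card hcardN r
  haveI : Nonempty {i : Fin N // i ≠ r} := ⟨⟨s, hs⟩⟩
  have hcard2 : 2 ≤ Fintype.card {i : Fin N // i ≠ r} := by
    have hc : Fintype.card {i : Fin N // ¬ i = r} = N - 1 := by
      rw [Fintype.card_subtype_compl, Fintype.card_subtype_eq, Fintype.card_fin]
    have : Fintype.card {i : Fin N // i ≠ r} = N - 1 := hc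
    omega
  have havg : ∀ θ φ : ℝ, avgGGM (ghz a1 a2 : PureState (Fin N)) r θ φ
      = min (Real.cos (θ/2) ^ 2 * Complex.normSq a1)
          (Real.sin (θ/2) ^ 2 * Complex.normSq a2)
        + min (Real.sin (θ/2) ^ 2 * Complex.normSq a1)
          (Real.cos (θ/2) ^ 2 * Complex.normSq a2) := by
    intro θ φ
    unfold avgGGM
    rw [collapse_ghz, collapse_ghz, nsq_mul_GGM_ghz hcard2, nsq_mul_GGM_ghz hcard2]
    rw [Complex.normSq_mul, Complex.normSq_mul, Complex.normSq_mul, Complex.normSq_mul]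
    rw [nq_up0, nq_up1, nq_dn0, nq_dn1]
  have hub : ∀ E ∈ {E | ∃ θ ∈ Set.Icc 0 Real.pi, ∃ φ ∈ Set.Ico 0 (2 * Real.pi),
      E = avgGGM (ghz a1 a2 : PureState (Fin N)) r θ φ},
      E ≤ min (Complex.normSq a1) (Complex.normSq a2) := by
    rintro E ⟨θ, hθ, φ, hφ, rfl⟩
    rw [havg]
    have hcs : Real.sin (θ/2) ^ 2 + Real.cos (θ/2) ^ 2 = 1 := Real.sin_sq_add_cos_sq _
    have hc2 := sq_nonneg (Real.cos (θ/2))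
    have hs2 := sq_nonneg (Real.sin (θ/2))
    apply le_min
    · have h1 : min (Real.cos (θ/2) ^ 2 * Complex.normSq a1)
          (Real.sin (θ/2) ^ 2 * Complex.normSq a2)
            ≤ Real.cos (θ/2) ^ 2 * Complex.normSq a1 := min_le_left _ _
      have h2 : min (Real.sin (θ/2) ^ 2 * Complex.normSq a1)
          (Real.cos (θ/2) ^ 2 * Complex.normSq a2)
            ≤ Real.sin (θ/2) ^ 2 * Complex.normSq a1 := min_le_left _ _
      nlinarith
    · have h1 : min (Real.cos (θ/2) ^ 2 * Complex.normSq a1)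
          (Real.sin (θ/2) ^ 2 * Complex.normSq a2)
            ≤ Real.sin (θ/2) ^ 2 * Complex.normSq a2 := min_le_right _ _
      have h2 : min (Real.sin (θ/2) ^ 2 * Complex.normSq a1)
          (Real.cos (θ/2) ^ 2 * Complex.normSq a2)
            ≤ Real.cos (θ/2) ^ 2 * Complex.normSq a2 := min_le_right _ _
      nlinarith
  have hpi := Real.pi_pos
  have hmem : min (Complex.normSq a1) (Complex.normSq a2)
      ∈ {E | ∃ θ ∈ Set.Icc 0 Real.pi, ∃ φ ∈ Set.Ico 0 (2 * Real.pi),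
        E = avgGGM (ghz a1 a2 : PureState (Fin N)) r θ φ} := by
    refine ⟨Real.pi / 2, ⟨by linarith, by linarith⟩, 0, ⟨le_refl 0, by linarith⟩, ?_⟩
    rw [havg]
    have hhalf : Real.pi / 2 / 2 = Real.pi / 4 := by ring
    have hc : Real.cos (Real.pi / 2 / 2) ^ 2 = 1 / 2 := by
      rw [hhalf, Real.cos_pi_div_four]
      rw [div_pow, Real.sq_sqrt (by norm_num : (0:ℝ) ≤ 2)]
      norm_num
    have hs : Real.sin (Real.pi / 2 / 2) ^ 2 = 1 / 2 := by
      rw [hhalf, Real.sin_pi_div_four]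
      rw [div_pow, Real.sq_sqrt (by norm_num : (0:ℝ) ≤ 2)]
      norm_num
    rw [hc, hs]
    rcases le_total (Complex.normSq a1) (Complex.normSq a2) with hxy | hxy
    · rw [min_eq_left hxy, min_eq_left (show (1:ℝ)/2 * Complex.normSq a1
          ≤ 1/2 * Complex.normSq a2 by linarith)]
      ring
    · rw [min_eq_right hxy, min_eq_right (show (1:ℝ)/2 * Complex.normSq a2
          ≤ 1/2 * Complex.normSq a1 by linarith)]
      ring
  unfold LGGM
  apply le_antisymm
  · exact csSup_le ⟨_, hmem⟩ hub
  · exact le_csSup ⟨_, hub⟩ hmem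


/-- The LGGM of the `N`-qubit generalized GHZ state under single-qubit
projective measurement equals its GGM, `min {|a₁|², |a₂|²}`. -/
theorem stmt5 (N : ℕ) (hN : 3 ≤ N) (a1 a2 : ℂ)
    (h : Complex.normSq a1 + Complex.normSq a2 = 1) :
    LGGM (ghz a1 a2 : PureState (Fin N)) ⟨0, by omega⟩ =
      min (Complex.normSq a1) (Complex.normSq a2) := by
  exact LGGM_ghz_eq N hN a1 a2 _

end QI
end
end

section
/- For any three-qubit generalized W state |W₃⟩ = a₁|100⟩ + a₂|010⟩ + a₃|001⟩ with Σ|a_i|² = 1, the LGGM obtained by projectively measuring qubit r equals min{|a_j|², |a_k|²} where {j,k} = {1,2,3} \ {r}, and this is greater than or equal to the GGM min{|a₁|², |a₂|², |a₃|²} of the original state. -/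
open scoped BigOperators

noncomputable section

namespace QI

variable {ι : Type} [Fintype ι] [DecidableEq ι]

section MaxEig
variable {κ : Type} [Fintype κ]

lemma ray_bddAbove (ρ : κ → κ → ℂ) :
    BddAbove (Set.range fun v : {v : κ → ℂ // ∑ i, Complex.normSq (v i) = 1} =>
      (∑ i, ∑ j, star (v.1 i) * ρ i j * v.1 j).re) := by
  refine ⟨∑ i, ∑ j, ‖ρ i j‖, ?_⟩
  rintro x ⟨⟨v, hv⟩, rfl⟩
  have hvle : ∀ i, ‖v i‖ ≤ 1 := by
    intro i
    have h1 : Complex.normSq (v i) ≤ 1 := by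
      rw [← hv]
      exact Finset.single_le_sum (fun i _ => Complex.normSq_nonneg (v i)) (Finset.mem_univ i)
    have := Complex.sq_norm (v i)
    nlinarith [norm_nonneg (v i)]
  calc (∑ i, ∑ j, star (v i) * ρ i j * v j).re
      ≤ ‖∑ i, ∑ j, star (v i) * ρ i j * v j‖ := Complex.re_le_norm _
    _ ≤ ∑ i, ‖∑ j, star (v i) * ρ i j * v j‖ := norm_sum_le _ _
    _ ≤ ∑ i, ∑ j, ‖star (v i) * ρ i j * v j‖ :=
        Finset.sum_le_sum fun i _ => norm_sum_le _ _
    _ ≤ ∑ i, ∑ j, ‖ρ i j‖ := by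
        refine Finset.sum_le_sum fun i _ => Finset.sum_le_sum fun j _ => ?_
        rw [norm_mul, norm_mul, Complex.star_def, Complex.norm_conj]
        calc ‖v i‖ * ‖ρ i j‖ * ‖v j‖
            ≤ 1 * ‖ρ i j‖ * 1 := by
              apply mul_le_mul (mul_le_mul (hvle i) le_rfl (norm_nonneg _)
                (by linarith [hvle i, norm_nonneg (v i)])) (hvle j)
                (norm_nonneg _) (by positivity)
          _ = ‖ρ i j‖ := by ring

lemma le_maxEig (ρ : κ → κ → ℂ) (v : κ → ℂ) (hv : ∑ i, Complex.normSq (v i) = 1) :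
    (∑ i, ∑ j, star (v i) * ρ i j * v j).re ≤ maxEig ρ :=
  le_ciSup (ray_bddAbove ρ) ⟨v, hv⟩

lemma unit_exists [Nonempty κ] [DecidableEq κ] :
    ∃ v : κ → ℂ, ∑ i, Complex.normSq (v i) = 1 := by
  classical
  obtain ⟨i0⟩ := ‹Nonempty κ›
  refine ⟨fun i => if i = i0 then 1 else 0, ?_⟩
  simp [apply_ite Complex.normSq]

lemma maxEig_le [Nonempty κ] [DecidableEq κ] (ρ : κ → κ → ℂ) (M : ℝ)
    (h : ∀ v : κ → ℂ, (∑ i, Complex.normSq (v i) = 1) →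
      (∑ i, ∑ j, star (v i) * ρ i j * v j).re ≤ M) : maxEig ρ ≤ M := by
  obtain ⟨v0, hv0⟩ := unit_exists (κ := κ)
  haveI : Nonempty {v : κ → ℂ // ∑ i, Complex.normSq (v i) = 1} := ⟨⟨v0, hv0⟩⟩
  exact ciSup_le fun v => h v.1 v.2

lemma maxEig_reindex {κ' : Type} [Fintype κ'] (e : κ ≃ κ') (ρ : κ' → κ' → ℂ) :
    maxEig (fun i j => ρ (e i) (e j)) = maxEig ρ := by
  unfold maxEig
  rw [iSup, iSup]
  congr 1
  ext x
  constructor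
  · rintro ⟨⟨v, hv⟩, rfl⟩
    refine ⟨⟨v ∘ e.symm, ?_⟩, ?_⟩
    · rw [← hv]; exact Fintype.sum_equiv e.symm _ _ fun i => rfl
    · simp only
      congr 1
      refine Fintype.sum_equiv e.symm _ _ fun i => ?_
      refine Fintype.sum_equiv e.symm _ _ fun j => ?_
      simp
  · rintro ⟨⟨v, hv⟩, rfl⟩
    refine ⟨⟨v ∘ e, ?_⟩, ?_⟩
    · rw [← hv]; exact Fintype.sum_equiv e _ _ fun i => rfl
    · simp only
      congr 1
      refine Fintype.sum_equiv e _ _ fun i => ?_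
      refine Fintype.sum_equiv e _ _ fun j => ?_
      simp

end MaxEig

set_option linter.unusedSectionVars false

section TwoQubit
variable {κ : Type} [Fintype κ] [DecidableEq κ] {u w : κ}

/-- general two-qubit state `c0|00> + cu|1_u> + cw|1_w>` -/
def tqs (u w : κ) (c0 cu cw : ℂ) : PureState κ := fun x =>
  if x = fun _ => 0 then c0 else if x = basisVec u then cu
  else if x = basisVec w then cw else 0

/-- entries table -/
def ent (c0 cu cw : ℂ) : Fin 2 → Fin 2 → ℂ := ![![c0, cw], ![cu, 0]]

lemma fin2cases : ∀ t : Fin 2, t = 0 ∨ t = 1 := by decide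

lemma zero_ne_bu (u : κ) : (fun _ => (0 : Fin 2)) ≠ basisVec u := by
  intro hcon; have := congrFun hcon u; simp [basisVec] at this

lemma bu_ne_bw (huw : u ≠ w) : basisVec u ≠ basisVec w := by
  intro hcon; have := congrFun hcon u; simp [basisVec, huw] at this

lemma zero_ne_ones (u : κ) : ((fun _ => (0 : Fin 2)) : κ → Fin 2) ≠ (fun _ => (1 : Fin 2)) := by
  intro hcon; have := congrFun hcon u; simp at this

lemma bu_ne_ones (huw : u ≠ w) : basisVec u ≠ (fun _ => (1 : Fin 2)) := by
  intro hcon; have := congrFun hcon w; simp [basisVec, Ne.symm huw] at this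

lemma tqs_zero (c0 cu cw : ℂ) : tqs u w c0 cu cw (fun _ => 0) = c0 := if_pos rfl

lemma tqs_bu (c0 cu cw : ℂ) : tqs u w c0 cu cw (basisVec u) = cu := by
  rw [tqs, if_neg (Ne.symm (zero_ne_bu u)), if_pos rfl]

lemma tqs_bw (huw : u ≠ w) (c0 cu cw : ℂ) : tqs u w c0 cu cw (basisVec w) = cw := by
  rw [tqs, if_neg (Ne.symm (zero_ne_bu w)),
    if_neg (Ne.symm (bu_ne_bw huw)), if_pos rfl]

lemma tqs_ones (huw : u ≠ w) (c0 cu cw : ℂ) : tqs u w c0 cu cw (fun _ => 1) = 0 := by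
  rw [tqs, if_neg (Ne.symm (zero_ne_ones u)),
    if_neg (Ne.symm (bu_ne_ones huw)), if_neg (Ne.symm (bu_ne_ones (Ne.symm huw)))]

lemma fun2_classify (huw : u ≠ w) (hall : ∀ i, i = u ∨ i = w) (x : κ → Fin 2) :
    x = (fun _ => 0) ∨ x = basisVec u ∨ x = basisVec w ∨ x = fun _ => 1 := by
  rcases fin2cases (x u) with hu|hu <;> rcases fin2cases (x w) with hw|hw
  · left; funext i; rcases hall i with rfl|rfl <;> assumption
  · right; right; left; funext i
    rcases hall i with rfl|rfl <;> simp [basisVec, hu, hw, huw]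
  · right; left; funext i
    rcases hall i with rfl|rfl <;> simp [basisVec, hu, hw, Ne.symm huw]
  · right; right; right; funext i; rcases hall i with rfl|rfl <;> assumption

lemma nsq_tqs (huw : u ≠ w) (hall : ∀ i, i = u ∨ i = w) (c0 cu cw : ℂ) :
    nsq (tqs u w c0 cu cw) =
    Complex.normSq c0 + Complex.normSq cu + Complex.normSq cw := by
  have huniv : (Finset.univ : Finset (κ → Fin 2)) =
      {fun _ => 0, basisVec u, basisVec w, fun _ => 1} := by
    ext x
    simp only [Finset.mem_univ, true_iff, Finset.mem_insert, Finset.mem_singleton]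
    exact fun2_classify huw hall x
  rw [nsq, huniv, Finset.sum_insert (by
        simp only [Finset.mem_insert, Finset.mem_singleton]
        push_neg
        exact ⟨zero_ne_bu u, zero_ne_bu w, zero_ne_ones u⟩),
    Finset.sum_insert (by
        simp only [Finset.mem_insert, Finset.mem_singleton]
        push_neg
        exact ⟨bu_ne_bw huw, bu_ne_ones huw⟩),
    Finset.sum_insert (by
        simp only [Finset.mem_singleton]
        exact bu_ne_ones (Ne.symm huw)),
    Finset.sum_singleton, tqs_zero, tqs_bu, tqs_bw huw, tqs_ones huw]
  simp
  ring

lemma tqs_comm (huw : u ≠ w) (c0 cu cw : ℂ) : tqs u w c0 cu cw = tqs w u c0 cw cu := by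
  funext x
  rw [tqs, tqs]
  by_cases h1 : x = fun _ => 0
  · rw [if_pos h1, if_pos h1]
  rw [if_neg h1, if_neg h1]
  by_cases h2 : x = basisVec u
  · rw [if_pos h2, if_neg (by rw [h2]; exact bu_ne_bw huw), if_pos h2]
  · rw [if_neg h2]
    by_cases h3 : x = basisVec w
    · rw [if_pos h3, if_pos h3]
    · rw [if_neg h3, if_neg h3, if_neg h2]

lemma normalize_tqs (c0 cu cw : ℂ) :
    normalize (tqs u w c0 cu cw) =
      tqs u w (c0 / ((Real.sqrt (nsq (tqs u w c0 cu cw)) : ℝ) : ℂ))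
        (cu / ((Real.sqrt (nsq (tqs u w c0 cu cw)) : ℝ) : ℂ))
        (cw / ((Real.sqrt (nsq (tqs u w c0 cu cw)) : ℝ) : ℂ)) := by
  funext x
  rw [normalize]
  rw [tqs, tqs]
  split_ifs <;> simp

lemma merge_singleton (x t : Fin 2) :
    merge ({u} : Finset κ) (fun _ => x) (fun _ => t) = fun i => if i = u then x else t := by
  funext i
  rw [merge]
  by_cases h : i = u
  · rw [if_pos h, dif_pos (by simp [h])]
  · rw [if_neg h, dif_neg (by simp [h])]

lemma tqs_ifuv (huw : u ≠ w) (hall : ∀ i, i = u ∨ i = w) (c0 cu cw : ℂ) (x t : Fin 2) :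
    tqs u w c0 cu cw (fun i => if i = u then x else t) = ent c0 cu cw x t := by
  rcases fin2cases x with rfl|rfl <;> rcases fin2cases t with rfl|rfl
  · rw [show (fun i => if i = u then (0:Fin 2) else 0) = (fun _ => (0:Fin 2)) by
      funext i; split <;> rfl, tqs_zero]
    simp [ent]
  · rw [show (fun i => if i = u then (0:Fin 2) else 1) = basisVec w by
      funext i; rcases hall i with rfl|rfl <;> simp [basisVec, huw, Ne.symm huw],
      tqs_bw huw]
    simp [ent]
  · rw [show (fun i => if i = u then (1:Fin 2) else 0) = basisVec u from rfl, tqs_bu]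
    simp [ent]
  · rw [show (fun i => if i = u then (1:Fin 2) else 1) = (fun _ => (1:Fin 2)) by
      funext i; split <;> rfl, tqs_ones huw]
    simp [ent]

lemma rdm_tqs (huw : u ≠ w) (hall : ∀ i, i = u ∨ i = w) (c0 cu cw : ℂ) (x y : Fin 2) :
    rdm (tqs u w c0 cu cw) ({u} : Finset κ) (fun _ => x) (fun _ => y) =
      ent c0 cu cw x 0 * star (ent c0 cu cw y 0) +
      ent c0 cu cw x 1 * star (ent c0 cu cw y 1) := by
  haveI : Unique {i : κ // i ∉ ({u} : Finset κ)} :=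
    { default := ⟨w, by simp [Ne.symm huw]⟩
      uniq := by
        rintro ⟨i, hi⟩
        have hiu : i ≠ u := by simpa using hi
        rcases hall i with rfl|rfl
        · exact absurd rfl hiu
        · rfl }
  rw [rdm, ← Equiv.sum_comp ((Equiv.funUnique {i : κ // i ∉ ({u} : Finset κ)} (Fin 2)).symm)
    (fun b => tqs u w c0 cu cw (merge {u} (fun _ => x) b) *
      star (tqs u w c0 cu cw (merge {u} (fun _ => y) b))), Fin.sum_univ_two]
  rw [show ((Equiv.funUnique {i : κ // i ∉ ({u} : Finset κ)} (Fin 2)).symm 0) =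
      (fun _ => (0:Fin 2)) from rfl,
    show ((Equiv.funUnique {i : κ // i ∉ ({u} : Finset κ)} (Fin 2)).symm 1) =
      (fun _ => (1:Fin 2)) from rfl]
  simp only [merge_singleton, tqs_ifuv huw hall]

end TwoQubit

section Fin2MaxEig

lemma star_mul_self_c (c z : ℂ) : star z * c * z = c * ((Complex.normSq z : ℝ) : ℂ) := by
  have h1 : star z * c * z = c * (z * (starRingEnd ℂ) z) := by
    rw [Complex.star_def]; ring
  rw [h1, Complex.mul_conj]

lemma ray_two (ρ : Fin 2 → Fin 2 → ℂ) (v : Fin 2 → ℂ) :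
    (∑ i, ∑ j, star (v i) * ρ i j * v j) =
      star (v 0) * ρ 0 0 * v 0 + star (v 0) * ρ 0 1 * v 1 +
      (star (v 1) * ρ 1 0 * v 0 + star (v 1) * ρ 1 1 * v 1) := by
  simp [Fin.sum_univ_two]

lemma re00_le_maxEig (ρ : Fin 2 → Fin 2 → ℂ) : (ρ 0 0).re ≤ maxEig ρ := by
  have h := le_maxEig ρ ![1, 0] (by simp [Fin.sum_univ_two])
  rw [ray_two] at h
  simpa using h

lemma maxEig_diag_two (ρ : Fin 2 → Fin 2 → ℂ) (x y : ℝ) (hx : 0 ≤ x) (hy : 0 ≤ y)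
    (h00 : ρ 0 0 = (x : ℂ)) (h11 : ρ 1 1 = (y : ℂ)) (h01 : ρ 0 1 = 0) (h10 : ρ 1 0 = 0) :
    maxEig ρ = max x y := by
  refine le_antisymm (maxEig_le _ _ ?_) ?_
  · intro v hv
    have hv2 : Complex.normSq (v 0) + Complex.normSq (v 1) = 1 := by
      rwa [Fin.sum_univ_two] at hv
    rw [ray_two, h00, h11, h01, h10]
    have he : star (v 0) * (x:ℂ) * v 0 + star (v 0) * 0 * v 1 +
        (star (v 1) * 0 * v 0 + star (v 1) * (y:ℂ) * v 1) =
        (((x * Complex.normSq (v 0) + y * Complex.normSq (v 1) : ℝ)) : ℂ) := by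
      rw [star_mul_self_c, star_mul_self_c]
      push_cast
      ring
    rw [he, Complex.ofReal_re]
    nlinarith [le_max_left x y, le_max_right x y,
      Complex.normSq_nonneg (v 0), Complex.normSq_nonneg (v 1)]
  · have h1 := le_maxEig ρ ![1, 0] (by simp [Fin.sum_univ_two])
    have h2 := le_maxEig ρ ![0, 1] (by simp [Fin.sum_univ_two])
    rw [ray_two] at h1 h2
    simp only [Matrix.cons_val_zero, Matrix.cons_val_one, Matrix.head_cons] at h1 h2
    rw [h00] at h1
    rw [h11] at h2
    refine max_le ?_ ?_
    · simpa using h1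
    · simpa using h2

end Fin2MaxEig

section GGMTwo
variable {κ : Type} [Fintype κ] [DecidableEq κ] {u w : κ}

lemma GGM_le_bipart {ι : Type} [Fintype ι] [DecidableEq ι] (ψ : PureState ι)
    (A : Finset ι) (hA1 : A.Nonempty) (hA2 : A ≠ Finset.univ) :
    GGM ψ ≤ 1 - maxEig (rdm ψ A) := by
  rw [GGM]
  have hle : maxEig (rdm ψ A) ≤
      ⨆ B : {B : Finset ι // B.Nonempty ∧ B ≠ Finset.univ}, maxEig (rdm ψ B.1) :=
    le_ciSup (f := fun B : {B : Finset ι // B.Nonempty ∧ B ≠ Finset.univ} =>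
      maxEig (rdm ψ B.1)) (Set.Finite.bddAbove (Set.finite_range _)) ⟨A, hA1, hA2⟩
  linarith

lemma singleton_ne_univ (huw : u ≠ w) : ({u} : Finset κ) ≠ Finset.univ := by
  intro hcon
  have : w ∈ ({u} : Finset κ) := hcon ▸ Finset.mem_univ w
  exact Ne.symm huw (Finset.mem_singleton.1 this)

lemma bipart_classify (hall : ∀ i, i = u ∨ i = w) (A : Finset κ)
    (h1 : A.Nonempty) (h2 : A ≠ Finset.univ) : A = {u} ∨ A = {w} := by
  by_cases hu : u ∈ A <;> by_cases hw : w ∈ A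
  · exact absurd (Finset.eq_univ_iff_forall.2 fun i => by
      rcases hall i with rfl|rfl <;> assumption) h2
  · left; ext i
    simp only [Finset.mem_singleton]
    constructor
    · intro hi
      rcases hall i with rfl|rfl
      · rfl
      · exact absurd hi hw
    · rintro rfl; exact hu
  · right; ext i
    simp only [Finset.mem_singleton]
    constructor
    · intro hi
      rcases hall i with rfl|rfl
      · exact absurd hi hu
      · rfl
    · rintro rfl; exact hw
  · obtain ⟨x, hx⟩ := h1
    rcases hall x with rfl|rfl
    · exact absurd hx hu
    · exact absurd hx hw

lemma GGM_eq_bipart (huw : u ≠ w) (hall : ∀ i, i = u ∨ i = w) (ψ : PureState κ) (m : ℝ)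
    (h1 : maxEig (rdm ψ {u}) = m) (h2 : maxEig (rdm ψ {w}) = m) : GGM ψ = 1 - m := by
  haveI : Nonempty {A : Finset κ // A.Nonempty ∧ A ≠ Finset.univ} :=
    ⟨⟨{u}, Finset.singleton_nonempty u, singleton_ne_univ huw⟩⟩
  have hsup : (⨆ A : {A : Finset κ // A.Nonempty ∧ A ≠ Finset.univ},
      maxEig (rdm ψ A.1)) = m := by
    refine le_antisymm (ciSup_le fun B => ?_) ?_
    · rcases bipart_classify hall B.1 B.2.1 B.2.2 with hB|hB <;> rw [hB]
      · exact h1.le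
      · exact h2.le
    · have := le_ciSup (f := fun A : {A : Finset κ // A.Nonempty ∧ A ≠ Finset.univ} =>
        maxEig (rdm ψ A.1)) (Set.Finite.bddAbove (Set.finite_range _))
        ⟨{u}, Finset.singleton_nonempty u, singleton_ne_univ huw⟩
      rwa [h1] at this
  rw [GGM, hsup]

lemma maxEig_rdm_eq (huw : u ≠ w) (hall : ∀ i, i = u ∨ i = w) (c0 cu cw : ℂ) :
    maxEig (rdm (tqs u w c0 cu cw) ({u} : Finset κ)) =
      maxEig (fun x y : Fin 2 =>
        ent c0 cu cw x 0 * star (ent c0 cu cw y 0) +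
        ent c0 cu cw x 1 * star (ent c0 cu cw y 1)) := by
  haveI : Unique {i : κ // i ∈ ({u} : Finset κ)} :=
    { default := ⟨u, Finset.mem_singleton_self u⟩
      uniq := by rintro ⟨i, hi⟩; ext; simpa using hi }
  rw [← maxEig_reindex ((Equiv.funUnique {i : κ // i ∈ ({u} : Finset κ)} (Fin 2)).symm)
    (rdm (tqs u w c0 cu cw) ({u} : Finset κ))]
  congr 1
  funext x y
  exact rdm_tqs huw hall c0 cu cw x y

lemma maxEig_rdm_ge (huw : u ≠ w) (hall : ∀ i, i = u ∨ i = w) (c0 cu cw : ℂ) :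
    Complex.normSq c0 + Complex.normSq cw ≤
      maxEig (rdm (tqs u w c0 cu cw) ({u} : Finset κ)) := by
  rw [maxEig_rdm_eq huw hall]
  have h := re00_le_maxEig (fun x y : Fin 2 =>
    ent c0 cu cw x 0 * star (ent c0 cu cw y 0) +
    ent c0 cu cw x 1 * star (ent c0 cu cw y 1))
  have he : (ent c0 cu cw 0 0 * star (ent c0 cu cw 0 0) +
      ent c0 cu cw 0 1 * star (ent c0 cu cw 0 1)) =
      (((Complex.normSq c0 + Complex.normSq cw : ℝ)) : ℂ) := by
    simp only [ent, Matrix.cons_val_zero, Matrix.cons_val_one, Matrix.head_cons,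
      Complex.star_def, Complex.mul_conj]
    push_cast
    ring
  rw [he] at h
  simpa using h

lemma maxEig_rdm_c0zero (huw : u ≠ w) (hall : ∀ i, i = u ∨ i = w) (cu cw : ℂ) :
    maxEig (rdm (tqs u w 0 cu cw) ({u} : Finset κ)) =
      max (Complex.normSq cw) (Complex.normSq cu) := by
  rw [maxEig_rdm_eq huw hall]
  refine maxEig_diag_two _ _ _ (Complex.normSq_nonneg _) (Complex.normSq_nonneg _) ?_ ?_ ?_ ?_ <;>
    simp [ent, Complex.star_def, Complex.mul_conj]

lemma maxEig_rdm_product (huw : u ≠ w) (hall : ∀ i, i = u ∨ i = w) (c0 : ℂ) :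
    maxEig (rdm (tqs u w c0 0 0) ({u} : Finset κ)) = max (Complex.normSq c0) 0 := by
  rw [maxEig_rdm_eq huw hall]
  refine maxEig_diag_two _ _ _ (Complex.normSq_nonneg _) le_rfl ?_ ?_ ?_ ?_ <;>
    simp [ent, Complex.star_def, Complex.mul_conj]

end GGMTwo

section ThreeQubit
variable (a : Fin 3 → ℂ) (r j k : Fin 3)

lemma wState_basis (i : Fin 3) : wState a (basisVec i) = a i := by
  rw [wState, Finset.sum_eq_single i]
  · rw [if_pos rfl]
  · intro i' _ hne
    rw [if_neg]
    intro hcon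
    exact bu_ne_bw (Ne.symm hne) hcon
  · intro hcon
    exact absurd (Finset.mem_univ i) hcon

lemma wState_nonbasis (x : Fin 3 → Fin 2) (hx : ∀ i, x ≠ basisVec i) : wState a x = 0 := by
  rw [wState]
  refine Finset.sum_eq_zero fun i _ => if_neg (hx i)

lemma x1_nonbasis (hjr : j ≠ r) (b : {i : Fin 3 // i ≠ r} → Fin 2)
    (i0 : {i : Fin 3 // i ≠ r}) (hb : b i0 = 1) (i' : Fin 3) :
    (fun i => if h : i = r then (1 : Fin 2) else b ⟨i, h⟩) ≠ basisVec i' := by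
  intro hcon
  have h1 := congrFun hcon r
  rw [dif_pos rfl] at h1
  have hri' : r = i' := by
    by_contra hne
    rw [basisVec, if_neg hne] at h1
    exact absurd h1 (by decide)
  have h2 := congrFun hcon i0.1
  rw [dif_neg i0.2] at h2
  have hbi : b ⟨i0.1, i0.2⟩ = 1 := by rw [Subtype.eta]; exact hb
  rw [hbi] at h2
  have : i0.1 = i' := by
    by_contra hne
    rw [basisVec, if_neg hne] at h2
    exact absurd h2 (by decide)
  exact i0.2 (this.trans hri'.symm)

lemma collapse_wState (hjr : j ≠ r) (hkr : k ≠ r) (hjk : j ≠ k)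
    (hall3 : ∀ i, i = r ∨ i = j ∨ i = k) (ξ : Fin 2 → ℂ) :
    collapse (wState a) r ξ =
      tqs (⟨j, hjr⟩ : {i : Fin 3 // i ≠ r}) ⟨k, hkr⟩
        (ξ 1 * a r) (ξ 0 * a j) (ξ 0 * a k) := by
  have huw' : (⟨j, hjr⟩ : {i : Fin 3 // i ≠ r}) ≠ ⟨k, hkr⟩ :=
    fun hcon => hjk (congrArg Subtype.val hcon)
  have hall' : ∀ i : {i : Fin 3 // i ≠ r}, i = ⟨j, hjr⟩ ∨ i = ⟨k, hkr⟩ := by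
    rintro ⟨i, hi⟩
    rcases hall3 i with rfl|rfl|rfl
    · exact absurd rfl hi
    · left; rfl
    · right; rfl
  funext b
  rw [collapse, Fin.sum_univ_two]
  rcases fun2_classify huw' hall' b with rfl|rfl|rfl|rfl
  · rw [show (fun i : Fin 3 => if h : i = r then (0:Fin 2) else (fun _ : {i : Fin 3 // i ≠ r} => (0:Fin 2)) ⟨i, h⟩)
        = (fun _ => (0:Fin 2)) by funext i; by_cases h : i = r <;> simp [h]]
    rw [show (fun i : Fin 3 => if h : i = r then (1:Fin 2) else (fun _ : {i : Fin 3 // i ≠ r} => (0:Fin 2)) ⟨i, h⟩)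
        = basisVec r by funext i; by_cases h : i = r <;> simp [basisVec, h]]
    rw [wState_nonbasis a _ (fun i => zero_ne_bu i), wState_basis, tqs_zero]
    ring
  · rw [show (fun i : Fin 3 => if h : i = r then (0:Fin 2)
        else basisVec (⟨j, hjr⟩ : {i : Fin 3 // i ≠ r}) ⟨i, h⟩) = basisVec j by
      funext i
      by_cases h : i = r
      · subst h; rw [dif_pos rfl, basisVec, if_neg (Ne.symm hjr)]
      · rw [dif_neg h, basisVec, basisVec]
        by_cases hij : i = j
        · rw [if_pos hij, if_pos (Subtype.ext hij)]
        · rw [if_neg hij, if_neg (fun hcon => hij (congrArg Subtype.val hcon))]]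
    rw [wState_basis,
      wState_nonbasis a _ (x1_nonbasis r j hjr _ ⟨j, hjr⟩ (by rw [basisVec, if_pos rfl])),
      tqs_bu]
    ring
  · rw [show (fun i : Fin 3 => if h : i = r then (0:Fin 2)
        else basisVec (⟨k, hkr⟩ : {i : Fin 3 // i ≠ r}) ⟨i, h⟩) = basisVec k by
      funext i
      by_cases h : i = r
      · subst h; rw [dif_pos rfl, basisVec, if_neg (Ne.symm hkr)]
      · rw [dif_neg h, basisVec, basisVec]
        by_cases hik : i = k
        · rw [if_pos hik, if_pos (Subtype.ext hik)]
        · rw [if_neg hik, if_neg (fun hcon => hik (congrArg Subtype.val hcon))]]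
    rw [wState_basis,
      wState_nonbasis a _ (x1_nonbasis r k hkr _ ⟨k, hkr⟩ (by rw [basisVec, if_pos rfl])),
      tqs_bw huw']
    ring
  · rw [wState_nonbasis a (fun i : Fin 3 => if h : i = r then (0:Fin 2) else (fun _ : {i : Fin 3 // i ≠ r} => (1:Fin 2)) ⟨i, h⟩)
        (by
          intro i' hcon
          have h1 := congrFun hcon j
          rw [dif_neg hjr] at h1
          have hji' : j = i' := by
            by_contra hne
            rw [basisVec, if_neg hne] at h1
            simp at h1
          have h2 := congrFun hcon k
          rw [dif_neg hkr] at h2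
          have hki' : k = i' := by
            by_contra hne
            rw [basisVec, if_neg hne] at h2
            simp at h2
          exact hjk (hji'.trans hki'.symm)),
      wState_nonbasis a _ (x1_nonbasis r j hjr (fun _ : {i : Fin 3 // i ≠ r} => (1:Fin 2)) ⟨j, hjr⟩ rfl),
      tqs_ones huw']
    ring

end ThreeQubit

section Main
variable (a : Fin 3 → ℂ) (r j k : Fin 3)

lemma branch_le (hjr : j ≠ r) (hkr : k ≠ r) (hjk : j ≠ k)
    (hall3 : ∀ i, i = r ∨ i = j ∨ i = k) (ξ : Fin 2 → ℂ) :
    nsq (collapse (wState a) r ξ) * GGM (normalize (collapse (wState a) r ξ)) ≤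
      Complex.normSq (ξ 0) * min (Complex.normSq (a j)) (Complex.normSq (a k)) := by
  have huw' : (⟨j, hjr⟩ : {i : Fin 3 // i ≠ r}) ≠ ⟨k, hkr⟩ :=
    fun hcon => hjk (congrArg Subtype.val hcon)
  have hall' : ∀ i : {i : Fin 3 // i ≠ r}, i = ⟨j, hjr⟩ ∨ i = ⟨k, hkr⟩ := by
    rintro ⟨i, hi⟩
    rcases hall3 i with rfl|rfl|rfl
    · exact absurd rfl hi
    · left; rfl
    · right; rfl
  have hall'' : ∀ i : {i : Fin 3 // i ≠ r}, i = ⟨k, hkr⟩ ∨ i = ⟨j, hjr⟩ :=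
    fun i => (hall' i).symm
  rw [collapse_wState a r j k hjr hkr hjk hall3 ξ]
  set c0 := ξ 1 * a r with hc0
  set cu := ξ 0 * a j with hcu
  set cw := ξ 0 * a k with hcw
  set N := nsq (tqs (⟨j, hjr⟩ : {i : Fin 3 // i ≠ r}) ⟨k, hkr⟩ c0 cu cw) with hN
  have hNval : N = Complex.normSq c0 + Complex.normSq cu + Complex.normSq cw :=
    nsq_tqs huw' hall' c0 cu cw
  have hmin0 : 0 ≤ min (Complex.normSq (a j)) (Complex.normSq (a k)) :=
    le_min (Complex.normSq_nonneg _) (Complex.normSq_nonneg _)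
  have hN0 : 0 ≤ N := by
    rw [hNval]
    have := Complex.normSq_nonneg c0
    have := Complex.normSq_nonneg cu
    have := Complex.normSq_nonneg cw
    linarith
  by_cases hNz : N = 0
  · rw [hNz, zero_mul]
    exact mul_nonneg (Complex.normSq_nonneg _) hmin0
  have hNpos : 0 < N := lt_of_le_of_ne hN0 (Ne.symm hNz)
  have hnormd : ∀ z : ℂ,
      Complex.normSq (z / ((Real.sqrt N : ℝ) : ℂ)) = Complex.normSq z / N := by
    intro z
    rw [Complex.normSq_div, Complex.normSq_ofReal, Real.mul_self_sqrt hN0]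
  rw [normalize_tqs]
  rw [← hN]
  rcases le_total (Complex.normSq (a j)) (Complex.normSq (a k)) with hpq|hpq
  · have hmin : min (Complex.normSq (a j)) (Complex.normSq (a k)) = Complex.normSq (a j) :=
      min_eq_left hpq
    have hG : GGM (tqs (⟨j, hjr⟩ : {i : Fin 3 // i ≠ r}) ⟨k, hkr⟩
        (c0 / ((Real.sqrt N : ℝ) : ℂ)) (cu / ((Real.sqrt N : ℝ) : ℂ))
        (cw / ((Real.sqrt N : ℝ) : ℂ))) ≤
        1 - (Complex.normSq c0 + Complex.normSq cw) / N := by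
      refine le_trans (GGM_le_bipart _ {⟨j, hjr⟩} (Finset.singleton_nonempty _)
        (singleton_ne_univ huw')) ?_
      have hge := maxEig_rdm_ge huw' hall' (c0 / ((Real.sqrt N : ℝ) : ℂ))
        (cu / ((Real.sqrt N : ℝ) : ℂ)) (cw / ((Real.sqrt N : ℝ) : ℂ))
      rw [hnormd, hnormd] at hge
      have : (Complex.normSq c0 + Complex.normSq cw) / N =
          Complex.normSq c0 / N + Complex.normSq cw / N := add_div _ _ _
      rw [this]
      linarith
    calc N * GGM (tqs (⟨j, hjr⟩ : {i : Fin 3 // i ≠ r}) ⟨k, hkr⟩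
          (c0 / ((Real.sqrt N : ℝ) : ℂ)) (cu / ((Real.sqrt N : ℝ) : ℂ))
          (cw / ((Real.sqrt N : ℝ) : ℂ)))
        ≤ N * (1 - (Complex.normSq c0 + Complex.normSq cw) / N) :=
          mul_le_mul_of_nonneg_left hG hN0
      _ = Complex.normSq cu := by
          field_simp
          linarith [hNval]
      _ = Complex.normSq (ξ 0) * min (Complex.normSq (a j)) (Complex.normSq (a k)) := by
          rw [hmin, hcu, Complex.normSq_mul]
  · have hmin : min (Complex.normSq (a j)) (Complex.normSq (a k)) = Complex.normSq (a k) :=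
      min_eq_right hpq
    rw [tqs_comm huw']
    have hG : GGM (tqs (⟨k, hkr⟩ : {i : Fin 3 // i ≠ r}) ⟨j, hjr⟩
        (c0 / ((Real.sqrt N : ℝ) : ℂ)) (cw / ((Real.sqrt N : ℝ) : ℂ))
        (cu / ((Real.sqrt N : ℝ) : ℂ))) ≤
        1 - (Complex.normSq c0 + Complex.normSq cu) / N := by
      refine le_trans (GGM_le_bipart _ {⟨k, hkr⟩} (Finset.singleton_nonempty _)
        (singleton_ne_univ (Ne.symm huw'))) ?_
      have hge := maxEig_rdm_ge (Ne.symm huw') hall'' (c0 / ((Real.sqrt N : ℝ) : ℂ))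
        (cw / ((Real.sqrt N : ℝ) : ℂ)) (cu / ((Real.sqrt N : ℝ) : ℂ))
      rw [hnormd, hnormd] at hge
      have : (Complex.normSq c0 + Complex.normSq cu) / N =
          Complex.normSq c0 / N + Complex.normSq cu / N := add_div _ _ _
      rw [this]
      linarith
    calc N * GGM (tqs (⟨k, hkr⟩ : {i : Fin 3 // i ≠ r}) ⟨j, hjr⟩
          (c0 / ((Real.sqrt N : ℝ) : ℂ)) (cw / ((Real.sqrt N : ℝ) : ℂ))
          (cu / ((Real.sqrt N : ℝ) : ℂ)))
        ≤ N * (1 - (Complex.normSq c0 + Complex.normSq cu) / N) :=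
          mul_le_mul_of_nonneg_left hG hN0
      _ = Complex.normSq cw := by
          field_simp
          linarith [hNval]
      _ = Complex.normSq (ξ 0) * min (Complex.normSq (a j)) (Complex.normSq (a k)) := by
          rw [hmin, hcw, Complex.normSq_mul]

lemma avg_le (hjr : j ≠ r) (hkr : k ≠ r) (hjk : j ≠ k)
    (hall3 : ∀ i, i = r ∨ i = j ∨ i = k) (θ φ : ℝ) :
    avgGGM (wState a) r θ φ ≤ min (Complex.normSq (a j)) (Complex.normSq (a k)) := by
  rw [avgGGM]
  have h1 := branch_le a r j k hjr hkr hjk hall3 (xiUp θ φ)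
  have h2 := branch_le a r j k hjr hkr hjk hall3 (xiDn θ φ)
  have hup : Complex.normSq (xiUp θ φ 0) = Real.cos (θ/2) ^ 2 := by
    rw [show xiUp θ φ 0 = ((Real.cos (θ/2) : ℝ) : ℂ) from rfl, Complex.normSq_ofReal, sq]
  have hdn : Complex.normSq (xiDn θ φ 0) = Real.sin (θ/2) ^ 2 := by
    have habs : ‖Complex.exp (-(↑φ * Complex.I))‖ = 1 := by
      rw [Complex.norm_exp]
      simp
    have hns : Complex.normSq (Complex.exp (-(↑φ * Complex.I))) = 1 := by
      rw [← Complex.sq_norm, habs, one_pow]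
    rw [show xiDn θ φ 0 = -(Complex.exp (-(↑φ * Complex.I))) * ((Real.sin (θ/2) : ℝ) : ℂ)
      from rfl, Complex.normSq_mul, Complex.normSq_neg, hns, one_mul,
      Complex.normSq_ofReal, sq]
  rw [hup] at h1
  rw [hdn] at h2
  have hpyth := Real.sin_sq_add_cos_sq (θ/2)
  set m := min (Complex.normSq (a j)) (Complex.normSq (a k)) with hm
  calc nsq (collapse (wState a) r (xiUp θ φ)) * GGM (normalize (collapse (wState a) r (xiUp θ φ))) +
      nsq (collapse (wState a) r (xiDn θ φ)) * GGM (normalize (collapse (wState a) r (xiDn θ φ)))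
      ≤ Real.cos (θ/2) ^ 2 * m + Real.sin (θ/2) ^ 2 * m := add_le_add h1 h2
    _ = (Real.sin (θ/2) ^ 2 + Real.cos (θ/2) ^ 2) * m := by ring
    _ = m := by rw [hpyth, one_mul]

lemma avg_pi (hjr : j ≠ r) (hkr : k ≠ r) (hjk : j ≠ k)
    (hall3 : ∀ i, i = r ∨ i = j ∨ i = k) :
    avgGGM (wState a) r Real.pi 0 = min (Complex.normSq (a j)) (Complex.normSq (a k)) := by
  have huw' : (⟨j, hjr⟩ : {i : Fin 3 // i ≠ r}) ≠ ⟨k, hkr⟩ :=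
    fun hcon => hjk (congrArg Subtype.val hcon)
  have hall' : ∀ i : {i : Fin 3 // i ≠ r}, i = ⟨j, hjr⟩ ∨ i = ⟨k, hkr⟩ := by
    rintro ⟨i, hi⟩
    rcases hall3 i with rfl|rfl|rfl
    · exact absurd rfl hi
    · left; rfl
    · right; rfl
  have hall'' : ∀ i : {i : Fin 3 // i ≠ r}, i = ⟨k, hkr⟩ ∨ i = ⟨j, hjr⟩ :=
    fun i => (hall' i).symm
  rw [avgGGM, collapse_wState a r j k hjr hkr hjk hall3 (xiUp Real.pi 0),
    collapse_wState a r j k hjr hkr hjk hall3 (xiDn Real.pi 0)]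
  have hxiUp0 : xiUp Real.pi 0 0 = 0 := by simp [xiUp]
  have hxiUp1 : xiUp Real.pi 0 1 = 1 := by simp [xiUp]
  have hxiDn0 : xiDn Real.pi 0 0 = -1 := by simp [xiDn]
  have hxiDn1 : xiDn Real.pi 0 1 = 0 := by simp [xiDn]
  rw [hxiUp0, hxiUp1, hxiDn0, hxiDn1, one_mul, zero_mul, zero_mul, zero_mul,
    neg_one_mul, neg_one_mul]
  set p := Complex.normSq (a j) with hp
  set q := Complex.normSq (a k) with hq
  have hupterm : nsq (tqs (⟨j, hjr⟩ : {i : Fin 3 // i ≠ r}) ⟨k, hkr⟩ (a r) 0 0) *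
      GGM (normalize (tqs (⟨j, hjr⟩ : {i : Fin 3 // i ≠ r}) ⟨k, hkr⟩ (a r) 0 0)) = 0 := by
    have hNval : nsq (tqs (⟨j, hjr⟩ : {i : Fin 3 // i ≠ r}) ⟨k, hkr⟩ (a r) 0 0) =
        Complex.normSq (a r) := by
      rw [nsq_tqs huw' hall']; simp
    by_cases hs : Complex.normSq (a r) = 0
    · rw [hNval, hs, zero_mul]
    · have hspos : 0 < Complex.normSq (a r) :=
        lt_of_le_of_ne (Complex.normSq_nonneg _) (Ne.symm hs)
      rw [normalize_tqs, hNval]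
      rw [zero_div]
      set d : ℂ := ((Real.sqrt (Complex.normSq (a r)) : ℝ) : ℂ) with hd
      have hnd : Complex.normSq (a r / d) = 1 := by
        rw [hd, Complex.normSq_div, Complex.normSq_ofReal,
          Real.mul_self_sqrt (Complex.normSq_nonneg _), div_self hs]
      have h1 : maxEig (rdm (tqs (⟨j, hjr⟩ : {i : Fin 3 // i ≠ r}) ⟨k, hkr⟩ (a r / d) 0 0)
          {⟨j, hjr⟩}) = 1 := by
        rw [maxEig_rdm_product huw' hall', hnd]
        simp
      have h2 : maxEig (rdm (tqs (⟨j, hjr⟩ : {i : Fin 3 // i ≠ r}) ⟨k, hkr⟩ (a r / d) 0 0)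
          {⟨k, hkr⟩}) = 1 := by
        rw [tqs_comm huw', maxEig_rdm_product (Ne.symm huw') hall'', hnd]
        simp
      rw [GGM_eq_bipart huw' hall' _ 1 h1 h2]
      simp
  have hdnterm : nsq (tqs (⟨j, hjr⟩ : {i : Fin 3 // i ≠ r}) ⟨k, hkr⟩ 0 (-(a j)) (-(a k))) *
      GGM (normalize (tqs (⟨j, hjr⟩ : {i : Fin 3 // i ≠ r}) ⟨k, hkr⟩ 0 (-(a j)) (-(a k)))) =
      min p q := by
    have hNval : nsq (tqs (⟨j, hjr⟩ : {i : Fin 3 // i ≠ r}) ⟨k, hkr⟩ 0 (-(a j)) (-(a k))) =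
        p + q := by
      rw [nsq_tqs huw' hall']
      simp [hp, hq]
    by_cases hN0 : p + q = 0
    · have hp0 : p = 0 := by
        have := Complex.normSq_nonneg (a j)
        have := Complex.normSq_nonneg (a k)
        rw [hp]; rw [hp, hq] at hN0; linarith
      have hq0 : q = 0 := by
        have := Complex.normSq_nonneg (a j)
        have := Complex.normSq_nonneg (a k)
        rw [hq]; rw [hp, hq] at hN0; linarith
      rw [hNval, hN0, zero_mul, hp0, hq0]
      simp
    · have hNpos : 0 < p + q := by
        have := Complex.normSq_nonneg (a j)
        have := Complex.normSq_nonneg (a k)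
        rw [hp, hq]
        rcases lt_or_eq_of_le (by positivity : (0:ℝ) ≤ Complex.normSq (a j) + Complex.normSq (a k)) with hlt|heq
        · exact hlt
        · exact absurd (by rw [hp, hq]; linarith : p + q = 0) hN0
      rw [normalize_tqs, hNval, zero_div]
      set d : ℂ := ((Real.sqrt (p + q) : ℝ) : ℂ) with hd
      have hnd : ∀ z : ℂ, Complex.normSq (z / d) = Complex.normSq z / (p + q) := by
        intro z
        rw [hd, Complex.normSq_div, Complex.normSq_ofReal, Real.mul_self_sqrt hNpos.le]
      have h1 : maxEig (rdm (tqs (⟨j, hjr⟩ : {i : Fin 3 // i ≠ r}) ⟨k, hkr⟩ 0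
          (-(a j) / d) (-(a k) / d)) {⟨j, hjr⟩}) = max (q / (p+q)) (p / (p+q)) := by
        rw [maxEig_rdm_c0zero huw' hall', hnd, hnd]
        simp [hp, hq]
      have h2 : maxEig (rdm (tqs (⟨j, hjr⟩ : {i : Fin 3 // i ≠ r}) ⟨k, hkr⟩ 0
          (-(a j) / d) (-(a k) / d)) {⟨k, hkr⟩}) = max (q / (p+q)) (p / (p+q)) := by
        rw [tqs_comm huw', maxEig_rdm_c0zero (Ne.symm huw') hall'', hnd, hnd]
        rw [max_comm]
        simp [hp, hq]
      rw [GGM_eq_bipart huw' hall' _ _ h1 h2]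
      have hmaxdiv : max (q / (p+q)) (p / (p+q)) = max q p / (p + q) := by
        rw [max_div_div_right hNpos.le]
      rw [hmaxdiv]
      have hminmax : min p q + max q p = p + q := by
        rw [max_comm]
        exact min_add_max p q
      field_simp
      linarith
  rw [hupterm, hdnterm, zero_add]

end Main

/-- For any three-qubit generalized W state with `Σᵢ |aᵢ|² = 1`, the LGGM
obtained by projectively measuring qubit `r` equals `min {|aⱼ|², |aₖ|²}`
(the minimum over the two unmeasured coefficients), and this is at least
the GGM `min {|a₁|², |a₂|², |a₃|²}` of the original state. -/
theorem stmt6 (a : Fin 3 → ℂ) (h : ∑ i, Complex.normSq (a i) = 1) (r : Fin 3) :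
    LGGM (wState a) r = (⨅ i : {i : Fin 3 // i ≠ r}, Complex.normSq (a i.1)) ∧
    (⨅ i, Complex.normSq (a i)) ≤ LGGM (wState a) r := by
  obtain ⟨j, k, hjr, hkr, hjk, hall3⟩ :
      ∃ j k : Fin 3, j ≠ r ∧ k ≠ r ∧ j ≠ k ∧ ∀ i, i = r ∨ i = j ∨ i = k := by
    fin_cases r
    · exact ⟨1, 2, by decide, by decide, by decide, by decide⟩
    · exact ⟨0, 2, by decide, by decide, by decide, by decide⟩
    · exact ⟨0, 1, by decide, by decide, by decide, by decide⟩
  set p := Complex.normSq (a j) with hp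
  set q := Complex.normSq (a k) with hq
  set S := {E | ∃ θ ∈ Set.Icc 0 Real.pi, ∃ φ ∈ Set.Ico 0 (2 * Real.pi),
    E = avgGGM (wState a) r θ φ} with hS
  have hub : ∀ E ∈ S, E ≤ min p q := by
    rintro E ⟨θ, hθ, φ, hφ, rfl⟩
    exact avg_le a r j k hjr hkr hjk hall3 θ φ
  have hmem : min p q ∈ S := by
    refine ⟨Real.pi, ⟨Real.pi_nonneg, le_refl _⟩, 0, ⟨le_refl 0, Real.two_pi_pos⟩, ?_⟩
    exact (avg_pi a r j k hjr hkr hjk hall3).symm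
  have hL : LGGM (wState a) r = min p q := by
    rw [LGGM]
    exact le_antisymm (csSup_le ⟨_, hmem⟩ hub) (le_csSup ⟨min p q, hub⟩ hmem)
  haveI : Nonempty {i : Fin 3 // i ≠ r} := ⟨⟨j, hjr⟩⟩
  constructor
  · rw [hL]
    refine le_antisymm (le_ciInf ?_) (le_min ?_ ?_)
    · rintro ⟨i, hi⟩
      rcases hall3 i with rfl|rfl|rfl
      · exact absurd rfl hi
      · exact min_le_left _ _
      · exact min_le_right _ _
    · exact ciInf_le (f := fun i : {i : Fin 3 // i ≠ r} => Complex.normSq (a i.1))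
        (Set.Finite.bddBelow (Set.finite_range _)) ⟨j, hjr⟩
    · exact ciInf_le (f := fun i : {i : Fin 3 // i ≠ r} => Complex.normSq (a i.1))
        (Set.Finite.bddBelow (Set.finite_range _)) ⟨k, hkr⟩
  · rw [hL]
    exact le_min (ciInf_le (Set.Finite.bddBelow (Set.finite_range _)) j)
      (ciInf_le (Set.Finite.bddBelow (Set.finite_range _)) k)

end QI
end
end

section
/- For any N-qubit generalized W state, the LGGM under single-qubit projective measurement on any qubit r is at least the GGM of the original state: E_L^r ≥ min_i |a_i|². -/
open scoped BigOperators

noncomputable section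

namespace QI

variable {ι : Type} [Fintype ι] [DecidableEq ι]

section Aux

lemma cs_normSq' {α : Type} (s : Finset α) (x y : α → ℂ) :
    Complex.normSq (∑ i ∈ s, x i * y i) ≤
      (∑ i ∈ s, Complex.normSq (x i)) * (∑ i ∈ s, Complex.normSq (y i)) := by
  have e : ∀ z : ℂ, Complex.normSq z = ‖z‖ ^ 2 := by
    intro z; rw [← Complex.sq_norm]
  calc Complex.normSq (∑ i ∈ s, x i * y i) = ‖∑ i ∈ s, x i * y i‖ ^ 2 := e _
    _ ≤ (∑ i ∈ s, ‖x i‖ * ‖y i‖) ^ 2 := by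
        have h1 : ‖∑ i ∈ s, x i * y i‖ ≤ ∑ i ∈ s, ‖x i‖ * ‖y i‖ := by
          refine (norm_sum_le _ _).trans_eq ?_
          exact Finset.sum_congr rfl fun i _ => norm_mul _ _
        exact pow_le_pow_left₀ (norm_nonneg _) h1 2
    _ ≤ (∑ i ∈ s, ‖x i‖ ^ 2) * (∑ i ∈ s, ‖y i‖ ^ 2) :=
        Finset.sum_mul_sq_le_sq_mul_sq _ _ _
    _ = _ := by simp only [← e]

lemma cs_normSq {α : Type} [Fintype α] (x y : α → ℂ) :
    Complex.normSq (∑ i, x i * y i) ≤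
      (∑ i, Complex.normSq (x i)) * (∑ i, Complex.normSq (y i)) :=
  cs_normSq' Finset.univ x y

lemma sum_comp_le {α β : Type} [Fintype α] [Fintype β] [DecidableEq β] (g : α → β)
    (hg : Function.Injective g) (f : β → ℝ) (hf : ∀ b, 0 ≤ f b) (T : Finset β)
    (hT : ∀ a, g a ∈ T) :
    ∑ a, f (g a) ≤ ∑ b ∈ T, f b := by
  rw [← Finset.sum_image (f := f) (g := g) (fun a _ b _ h => hg h)]
  refine Finset.sum_le_sum_of_subset_of_nonneg ?_ (fun b _ _ => hf b)
  intro b hb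
  simp only [Finset.mem_image] at hb
  obtain ⟨a, _, rfl⟩ := hb
  exact hT a

instance unitNonempty {κ : Type} [Fintype κ] [DecidableEq κ] [Nonempty κ] :
    Nonempty {v : κ → ℂ // ∑ i, Complex.normSq (v i) = 1} := by
  obtain ⟨a₀⟩ := ‹Nonempty κ›
  exact ⟨⟨fun a => if a = a₀ then 1 else 0, by
    simp [apply_ite Complex.normSq, Finset.sum_ite_eq']⟩⟩

lemma sum_rotate {α β γ : Type} [Fintype α] [Fintype β] [Fintype γ] (f : α → β → γ → ℂ) :
    ∑ i, ∑ j, ∑ b, f i j b = ∑ b, ∑ i, ∑ j, f i j b :=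
  calc ∑ i, ∑ j, ∑ b, f i j b
      = ∑ i, ∑ b, ∑ j, f i j b := Finset.sum_congr rfl (fun _ _ => Finset.sum_comm)
    _ = ∑ b, ∑ i, ∑ j, f i j b := Finset.sum_comm

lemma rayleigh_re {ι : Type} [Fintype ι] [DecidableEq ι] (ψ : QI.PureState ι) (A : Finset ι)
    (v : ({i // i ∈ A} → Fin 2) → ℂ) :
    (∑ i, ∑ j, star (v i) * QI.rdm ψ A i j * v j).re
      = ∑ b : {i // i ∉ A} → Fin 2,
          Complex.normSq (∑ a, star (v a) * ψ (QI.merge A a b)) := by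
  have key : (∑ i, ∑ j, star (v i) * QI.rdm ψ A i j * v j)
      = ∑ b : {i // i ∉ A} → Fin 2,
          (∑ a, star (v a) * ψ (QI.merge A a b)) *
            star (∑ a, star (v a) * ψ (QI.merge A a b)) := by
    unfold QI.rdm
    simp only [Finset.mul_sum, Finset.sum_mul, star_sum, star_mul', star_star]
    rw [sum_rotate]
    refine Finset.sum_congr rfl fun b _ => ?_
    rw [Finset.sum_comm]
    refine Finset.sum_congr rfl fun i _ => ?_
    refine Finset.sum_congr rfl fun j _ => ?_
    ring
  rw [key]
  simp only [Complex.re_sum]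
  refine Finset.sum_congr rfl fun b _ => ?_
  rw [Complex.star_def, Complex.mul_conj, Complex.ofReal_re]

end Aux
section Aux2
variable {ι : Type} [Fintype ι] [DecidableEq ι]

lemma sum_merge (A : Finset ι) (f : (ι → Fin 2) → ℝ) :
    ∑ b : {i // i ∉ A} → Fin 2, ∑ a : {i // i ∈ A} → Fin 2, f (merge A a b)
      = ∑ x, f x := by
  rw [← Fintype.sum_prod_type']
  refine (Fintype.sum_bijective
    (fun p : ({i // i ∉ A} → Fin 2) × ({i // i ∈ A} → Fin 2) => merge A p.2 p.1)
    ?_ _ f (fun p => rfl)).symm.symm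
  refine Function.bijective_iff_has_inverse.mpr
    ⟨fun x => (fun i => x i.1, fun i => x i.1), ?_, ?_⟩
  · rintro ⟨b, a⟩
    refine Prod.ext ?_ ?_
    · funext i; simp [merge, i.2]
    · funext i; simp [merge, i.2]
  · intro x
    funext i
    by_cases h : i ∈ A <;> simp [merge, h]

lemma rayleigh_le_nsq (ψ : PureState ι) (A : Finset ι)
    (v : ({i // i ∈ A} → Fin 2) → ℂ) (hv : ∑ i, Complex.normSq (v i) = 1) :
    (∑ i, ∑ j, star (v i) * rdm ψ A i j * v j).re ≤ nsq ψ := by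
  rw [rayleigh_re]
  calc ∑ b : {i // i ∉ A} → Fin 2, Complex.normSq (∑ a, star (v a) * ψ (merge A a b))
      ≤ ∑ b : {i // i ∉ A} → Fin 2,
          (∑ a, Complex.normSq (star (v a))) * (∑ a, Complex.normSq (ψ (merge A a b))) :=
        Finset.sum_le_sum fun b _ => cs_normSq _ _
    _ = ∑ b : {i // i ∉ A} → Fin 2, ∑ a, Complex.normSq (ψ (merge A a b)) := by
        refine Finset.sum_congr rfl fun b _ => ?_
        simp only [Complex.star_def, Complex.normSq_conj, hv, one_mul]
    _ = nsq ψ := by unfold nsq; exact sum_merge A (fun x => Complex.normSq (ψ x))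

lemma rayleigh_nonneg (ψ : PureState ι) (A : Finset ι)
    (v : ({i // i ∈ A} → Fin 2) → ℂ) :
    0 ≤ (∑ i, ∑ j, star (v i) * rdm ψ A i j * v j).re := by
  rw [rayleigh_re]
  exact Finset.sum_nonneg fun b _ => Complex.normSq_nonneg _

lemma maxEig_rdm_le_nsq (ψ : PureState ι) (A : Finset ι) :
    maxEig (rdm ψ A) ≤ nsq ψ := by
  unfold maxEig
  exact ciSup_le fun v => rayleigh_le_nsq ψ A v.1 v.2

lemma maxEig_rdm_nonneg (ψ : PureState ι) (A : Finset ι) :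
    0 ≤ maxEig (rdm ψ A) := by
  obtain ⟨v⟩ := (inferInstance :
    Nonempty {v : ({i // i ∈ A} → Fin 2) → ℂ // ∑ i, Complex.normSq (v i) = 1})
  unfold maxEig
  refine le_trans (rayleigh_nonneg ψ A v.1)
    (le_ciSup (f := fun v : {v : ({i // i ∈ A} → Fin 2) → ℂ // ∑ i, Complex.normSq (v i) = 1} =>
      (∑ i, ∑ j, star (v.1 i) * rdm ψ A i j * v.1 j).re) ?_ v)
  exact ⟨nsq ψ, by rintro _ ⟨w, rfl⟩; exact rayleigh_le_nsq ψ A w.1 w.2⟩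

lemma GGM_le_one (ψ : PureState ι)
    (hne : Nonempty {A : Finset ι // A.Nonempty ∧ A ≠ Finset.univ}) :
    GGM ψ ≤ 1 := by
  unfold GGM
  have h0 : 0 ≤ ⨆ A : {A : Finset ι // A.Nonempty ∧ A ≠ Finset.univ}, maxEig (rdm ψ A.1) :=
    le_trans (maxEig_rdm_nonneg ψ hne.some.1)
      (le_ciSup (f := fun A : {A : Finset ι // A.Nonempty ∧ A ≠ Finset.univ} =>
        maxEig (rdm ψ A.1)) (Set.Finite.bddAbove (Set.finite_range _)) hne.some)
  linarith

lemma GGM_nonneg (ψ : PureState ι) (hψ : nsq ψ ≤ 1)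
    (hne : Nonempty {A : Finset ι // A.Nonempty ∧ A ≠ Finset.univ}) :
    0 ≤ GGM ψ := by
  unfold GGM
  have h1 : (⨆ A : {A : Finset ι // A.Nonempty ∧ A ≠ Finset.univ}, maxEig (rdm ψ A.1)) ≤ 1 :=
    ciSup_le fun A => le_trans (maxEig_rdm_le_nsq ψ A.1) hψ
  linarith

lemma GGM_ge (ψ : PureState ι) (t : ℝ)
    (hne : Nonempty {A : Finset ι // A.Nonempty ∧ A ≠ Finset.univ})
    (hA : ∀ A : Finset ι, A.Nonempty → A ≠ Finset.univ → maxEig (rdm ψ A) ≤ 1 - t) :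
    t ≤ GGM ψ := by
  unfold GGM
  have h1 : (⨆ A : {A : Finset ι // A.Nonempty ∧ A ≠ Finset.univ}, maxEig (rdm ψ A.1)) ≤ 1 - t :=
    ciSup_le fun A => hA A.1 A.2.1 A.2.2
  linarith

end Aux2
section Aux3
variable {ι : Type} [Fintype ι] [DecidableEq ι]

lemma basisVec_injective : Function.Injective (basisVec (ι := ι)) := by
  intro i j hij
  by_contra hne
  have h1 := congrFun hij i
  simp [basisVec, hne] at h1

lemma wState_apply_basisVec (c : ι → ℂ) (i : ι) : wState c (basisVec i) = c i := by
  unfold wState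
  rw [Finset.sum_eq_single i]
  · simp
  · intro j _ hj
    rw [if_neg]
    exact fun hh => hj (basisVec_injective hh.symm)
  · simp

lemma wState_apply_ne (c : ι → ℂ) (x : ι → Fin 2) (hx : ∀ i, x ≠ basisVec i) :
    wState c x = 0 := by
  unfold wState
  exact Finset.sum_eq_zero fun i _ => if_neg (hx i)

lemma nsq_wState (c : ι → ℂ) : nsq (wState c) = ∑ i, Complex.normSq (c i) := by
  unfold nsq
  have h1 : ∑ x ∈ Finset.univ.image basisVec, Complex.normSq (wState c x)
      = ∑ x : ι → Fin 2, Complex.normSq (wState c x) := by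
    refine Finset.sum_subset (Finset.subset_univ _) fun x _ hx => ?_
    rw [wState_apply_ne c x, Complex.normSq_zero]
    intro i hi
    exact hx (hi ▸ Finset.mem_image_of_mem basisVec (Finset.mem_univ i))
  rw [← h1, Finset.sum_image (fun i _ j _ h => basisVec_injective h)]
  exact Finset.sum_congr rfl fun i _ => by rw [wState_apply_basisVec]
end Aux3
section Aux4
variable {J : Type} [Fintype J] [DecidableEq J]

/-- Restriction of `basisVec i` to the qubits in `A`. -/
def resA (A : Finset J) (i : J) : {j // j ∈ A} → Fin 2 := fun j => if j.1 = i then 1 else 0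

/-- Restriction of `basisVec i` to the qubits outside `A`. -/
def resAc (A : Finset J) (i : J) : {j // j ∉ A} → Fin 2 := fun j => if j.1 = i then 1 else 0

lemma merge_eq_basisVec (A : Finset J) (a : {j // j ∈ A} → Fin 2)
    (b : {j // j ∉ A} → Fin 2) (i : J) :
    merge A a b = basisVec i ↔ a = resA A i ∧ b = resAc A i := by
  constructor
  · intro h
    constructor
    · funext j
      have h1 := congrFun h j.1
      simpa [merge, j.2, basisVec, resA] using h1
    · funext j
      have h1 := congrFun h j.1
      simpa [merge, j.2, basisVec, resAc] using h1
  · rintro ⟨rfl, rfl⟩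
    funext j
    by_cases h : j ∈ A <;> simp [merge, h, basisVec, resA, resAc]

lemma resAc_eq_zero_iff (A : Finset J) (i : J) :
    resAc A i = (fun _ => 0) ↔ i ∈ A := by
  constructor
  · intro h
    by_contra hi
    have h1 := congrFun h ⟨i, hi⟩
    simp [resAc] at h1
  · intro hi
    funext j
    rw [resAc, if_neg]
    exact fun hji => j.2 (hji ▸ hi)

lemma resAc_inj (A : Finset J) {i j : J} (hi : i ∉ A) (hj : j ∉ A)
    (h : resAc A i = resAc A j) : i = j := by
  have h1 := congrFun h ⟨i, hi⟩
  by_contra hne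
  simp [resAc, hne] at h1

lemma resA_inj (A : Finset J) {i j : J} (hi : i ∈ A) (hj : j ∈ A)
    (h : resA A i = resA A j) : i = j := by
  have h1 := congrFun h ⟨i, hi⟩
  by_contra hne
  simp [resA, hne] at h1

lemma resA_ne_zero (A : Finset J) {i : J} (hi : i ∈ A) :
    resA A i ≠ (fun _ => 0) := by
  intro h
  have h1 := congrFun h ⟨i, hi⟩
  simp [resA] at h1

lemma resA_eq_zero (A : Finset J) {i : J} (hi : i ∉ A) :
    resA A i = (fun _ => 0) := by
  funext j
  rw [resA, if_neg]
  exact fun hji => hi (hji ▸ j.2)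

lemma F_eq (A : Finset J) (d : J → ℂ) (v : ({j // j ∈ A} → Fin 2) → ℂ)
    (b : {j // j ∉ A} → Fin 2) :
    (∑ a, star (v a) * wState d (merge A a b))
      = ∑ i, if b = resAc A i then star (v (resA A i)) * d i else 0 := by
  unfold wState
  simp only [Finset.mul_sum]
  rw [Finset.sum_comm]
  refine Finset.sum_congr rfl fun i _ => ?_
  by_cases hb : b = resAc A i
  · rw [if_pos hb, Finset.sum_eq_single (resA A i)]
    · rw [if_pos ((merge_eq_basisVec A _ b i).mpr ⟨rfl, hb⟩)]
    · intro a _ ha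
      rw [if_neg, mul_zero]
      exact fun hc => ha ((merge_eq_basisVec A a b i).mp hc).1
    · simp
  · rw [if_neg hb]
    refine Finset.sum_eq_zero fun a _ => ?_
    rw [if_neg, mul_zero]
    exact fun hc => hb ((merge_eq_basisVec A a b i).mp hc).2

lemma rayleigh_w_le (d : J → ℂ) (hd : ∑ i, Complex.normSq (d i) = 1) (t : ℝ)
    (ht : ∀ i, t ≤ Complex.normSq (d i)) (A : Finset J) (hA : A.Nonempty)
    (hAu : A ≠ Finset.univ) (v : ({j // j ∈ A} → Fin 2) → ℂ)
    (hv : ∑ i, Complex.normSq (v i) = 1) :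
    (∑ i, ∑ j, star (v i) * rdm (wState d) A i j * v j).re ≤ 1 - t := by
  rw [rayleigh_re]
  set z0 : {j // j ∉ A} → Fin 2 := fun _ => 0 with hz0
  set k0 : {j // j ∈ A} → Fin 2 := fun _ => 0 with hk0
  set p : ℝ := ∑ i ∈ A, Complex.normSq (d i) with hp
  set q : ℝ := ∑ i ∈ Aᶜ, Complex.normSq (d i) with hq
  set t₀ : ℝ := Complex.normSq (v k0) with ht₀
  -- split off the all-zero outcome
  have split : ∑ b : {j // j ∉ A} → Fin 2,
        Complex.normSq (∑ a, star (v a) * wState d (merge A a b))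
      = Complex.normSq (∑ a, star (v a) * wState d (merge A a z0))
        + ∑ b ∈ Finset.univ.erase z0,
            Complex.normSq (∑ a, star (v a) * wState d (merge A a b)) :=
    (Finset.add_sum_erase _ _ (Finset.mem_univ z0)).symm
  -- value at z0
  have hFz0 : (∑ a, star (v a) * wState d (merge A a z0))
      = ∑ i ∈ A, star (v (resA A i)) * d i := by
    rw [F_eq]
    calc ∑ i, (if z0 = resAc A i then star (v (resA A i)) * d i else 0)
        = ∑ i, (if i ∈ A then star (v (resA A i)) * d i else 0) :=
          Finset.sum_congr rfl fun i _ =>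
            if_congr (by rw [hz0, eq_comm]; exact resAc_eq_zero_iff A i) rfl rfl
      _ = ∑ i ∈ A, star (v (resA A i)) * d i := by
          rw [Finset.sum_ite_mem, Finset.univ_inter]
  -- the remaining outcomes
  have himg : ∑ b ∈ Aᶜ.image (resAc A),
        Complex.normSq (∑ a, star (v a) * wState d (merge A a b))
      = ∑ b ∈ Finset.univ.erase z0,
          Complex.normSq (∑ a, star (v a) * wState d (merge A a b)) := by
    refine Finset.sum_subset ?_ ?_
    · intro b hb
      obtain ⟨j, hj, rfl⟩ := Finset.mem_image.mp hb
      refine Finset.mem_erase.mpr ⟨?_, Finset.mem_univ _⟩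
      rw [hz0]
      exact fun hc => (Finset.mem_compl.mp hj) ((resAc_eq_zero_iff A j).mp hc)
    · intro b hb hbn
      have hFb : (∑ a, star (v a) * wState d (merge A a b)) = 0 := by
        rw [F_eq]
        refine Finset.sum_eq_zero fun i _ => ?_
        refine if_neg fun hc => ?_
        by_cases hiA : i ∈ A
        · refine (Finset.mem_erase.mp hb).1 ?_
          rw [hc, hz0]
          exact (resAc_eq_zero_iff A i).mpr hiA
        · exact hbn (hc ▸ Finset.mem_image_of_mem (resAc A) (Finset.mem_compl.mpr hiA))
      rw [hFb, Complex.normSq_zero]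
  have himg2 : ∑ b ∈ Aᶜ.image (resAc A),
        Complex.normSq (∑ a, star (v a) * wState d (merge A a b))
      = ∑ j ∈ Aᶜ, Complex.normSq (∑ a, star (v a) * wState d (merge A a (resAc A j))) :=
    Finset.sum_image fun i hi j hj h =>
      resAc_inj A (Finset.mem_compl.mp hi) (Finset.mem_compl.mp hj) h
  have hFj : ∀ j ∈ Aᶜ, (∑ a, star (v a) * wState d (merge A a (resAc A j)))
      = star (v k0) * d j := by
    intro j hj
    have hj' : j ∉ A := Finset.mem_compl.mp hj
    rw [F_eq, Finset.sum_eq_single j]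
    · rw [if_pos rfl, resA_eq_zero A hj']
    · intro i _ hij
      refine if_neg fun hc => ?_
      by_cases hiA : i ∈ A
      · exact hj' ((resAc_eq_zero_iff A j).mp (hc.trans ((resAc_eq_zero_iff A i).mpr hiA)))
      · exact hij (resAc_inj A hj' hiA hc).symm
    · simp
  have hrest : ∑ j ∈ Aᶜ, Complex.normSq (∑ a, star (v a) * wState d (merge A a (resAc A j)))
      = t₀ * q := by
    rw [Finset.sum_congr rfl fun j hj => by rw [hFj j hj]]
    rw [hq, Finset.mul_sum]
    refine Finset.sum_congr rfl fun j _ => ?_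
    rw [Complex.normSq_mul, ht₀, Complex.star_def, Complex.normSq_conj]
  -- Cauchy–Schwarz bound at z0
  have hcs : Complex.normSq (∑ i ∈ A, star (v (resA A i)) * d i)
      ≤ (∑ i ∈ A, Complex.normSq (v (resA A i))) * p := by
    refine (cs_normSq' A _ _).trans ?_
    rw [hp]
    gcongr with i hi
    · exact Finset.sum_nonneg fun i _ => Complex.normSq_nonneg _
    · rw [Complex.star_def, Complex.normSq_conj]
  have hsumv : ∑ i ∈ A, Complex.normSq (v (resA A i)) ≤ 1 - t₀ := by
    have h1 : ∑ i ∈ A, Complex.normSq (v (resA A i))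
        = ∑ a ∈ A.image (resA A), Complex.normSq (v a) :=
      (Finset.sum_image (f := fun a => Complex.normSq (v a)) fun i hi j hj h => resA_inj A hi hj h).symm
    have h2 : ∑ a ∈ A.image (resA A), Complex.normSq (v a)
        ≤ ∑ a ∈ Finset.univ.erase k0, Complex.normSq (v a) := by
      refine Finset.sum_le_sum_of_subset_of_nonneg ?_
        (fun a _ _ => Complex.normSq_nonneg _)
      intro a ha
      obtain ⟨i, hi, rfl⟩ := Finset.mem_image.mp ha
      exact Finset.mem_erase.mpr ⟨hk0 ▸ resA_ne_zero A hi, Finset.mem_univ _⟩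
    have h3 : Complex.normSq (v k0) + ∑ a ∈ Finset.univ.erase k0, Complex.normSq (v a)
        = 1 := by rw [Finset.add_sum_erase _ (fun a => Complex.normSq (v a)) (Finset.mem_univ k0)]; exact hv
    rw [← ht₀] at h3
    linarith
  -- arithmetic
  have hpq : p + q = 1 := by rw [hp, hq, Finset.sum_add_sum_compl]; exact hd
  have hpt : t ≤ p := by
    obtain ⟨i0, hi0⟩ := hA
    exact (ht i0).trans (Finset.single_le_sum (fun i _ => Complex.normSq_nonneg _) hi0)
  have hqt : t ≤ q := by
    have : ∃ j, j ∉ A := by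
      by_contra hc
      push_neg at hc
      exact hAu (Finset.eq_univ_iff_forall.mpr hc)
    obtain ⟨j0, hj0⟩ := this
    exact (ht j0).trans
      (Finset.single_le_sum (fun i _ => Complex.normSq_nonneg _) (Finset.mem_compl.mpr hj0))
  have ht0 : 0 ≤ t₀ := Complex.normSq_nonneg _
  have ht01 : t₀ ≤ 1 := by
    have := Finset.single_le_sum (f := fun a => Complex.normSq (v a))
      (fun a _ => Complex.normSq_nonneg _) (Finset.mem_univ k0)
    rw [hv] at this
    exact this
  have hsv0 : 0 ≤ ∑ i ∈ A, Complex.normSq (v (resA A i)) :=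
    Finset.sum_nonneg fun i _ => Complex.normSq_nonneg _
  have hp0 : 0 ≤ p := Finset.sum_nonneg fun i _ => Complex.normSq_nonneg _
  rw [split, hFz0, ← himg, himg2, hrest]
  nlinarith [mul_le_mul_of_nonneg_right hsumv hp0, mul_nonneg ht0 (by linarith : (0:ℝ) ≤ 1 - t - q),
    mul_nonneg (by linarith : (0:ℝ) ≤ 1 - t₀) (by linarith : (0:ℝ) ≤ 1 - t - p)]

end Aux4
section Aux5

lemma nonempty_bipartitions {J : Type} [Fintype J] [DecidableEq J]
    (h : 1 < Fintype.card J) :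
    Nonempty {A : Finset J // A.Nonempty ∧ A ≠ Finset.univ} := by
  obtain ⟨x, y, hxy⟩ := Fintype.exists_pair_of_one_lt_card h
  refine ⟨⟨{x}, Finset.singleton_nonempty x, fun hu => hxy ?_⟩⟩
  have : y ∈ ({x} : Finset J) := hu ▸ Finset.mem_univ y
  exact (Finset.mem_singleton.mp this).symm

lemma GGM_wState_ge {J : Type} [Fintype J] [DecidableEq J] (d : J → ℂ)
    (hd : ∑ i, Complex.normSq (d i) = 1) (hcard : 1 < Fintype.card J) (t : ℝ)
    (ht : ∀ i, t ≤ Complex.normSq (d i)) : t ≤ GGM (wState d) := by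
  have hne := nonempty_bipartitions hcard
  refine GGM_ge (wState d) t hne fun A hA hAu => ?_
  unfold maxEig
  exact ciSup_le fun v => rayleigh_w_le d hd t ht A hA hAu v.1 v.2

lemma normSq_add_le (x y : ℂ) :
    Complex.normSq (x + y) ≤ 2 * Complex.normSq x + 2 * Complex.normSq y := by
  have e : ∀ z : ℂ, Complex.normSq z = ‖z‖ ^ 2 := by
    intro z; rw [← Complex.sq_norm]
  rw [e, e, e]
  have h1 := norm_add_le x y
  nlinarith [norm_nonneg x, norm_nonneg y, sq_nonneg (‖x‖ - ‖y‖), norm_nonneg (x + y)]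

lemma nsq_normalize_le_one {ι : Type} [Fintype ι] [DecidableEq ι] (ψ : PureState ι) :
    nsq (normalize ψ) ≤ 1 := by
  have hn : 0 ≤ nsq ψ := Finset.sum_nonneg fun x _ => Complex.normSq_nonneg _
  by_cases h : nsq ψ = 0
  · unfold nsq normalize
    simp [h, Real.sqrt_zero]
  · have : nsq (normalize ψ) = 1 := by
      unfold nsq normalize
      simp only [Complex.normSq_div, ← Finset.sum_div]
      rw [Complex.normSq_ofReal, Real.mul_self_sqrt hn]
      exact div_self h
    exact this.le

lemma nsq_normalize_eq_one {ι : Type} [Fintype ι] [DecidableEq ι] (ψ : PureState ι)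
    (h : nsq ψ ≠ 0) : nsq (normalize ψ) = 1 := by
  have hn : 0 ≤ nsq ψ := Finset.sum_nonneg fun x _ => Complex.normSq_nonneg _
  unfold nsq normalize
  simp only [Complex.normSq_div, ← Finset.sum_div]
  rw [Complex.normSq_ofReal, Real.mul_self_sqrt hn]
  exact div_self h

lemma nsq_collapse_le {ι : Type} [Fintype ι] [DecidableEq ι] (ψ : PureState ι) (r : ι)
    (ξ : Fin 2 → ℂ) (hξ : ∀ v, ‖ξ v‖ ≤ 1) :
    nsq (collapse ψ r ξ) ≤ 4 * nsq ψ := by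
  have hsub : ∀ v : Fin 2,
      ∑ b : {i // i ≠ r} → Fin 2,
        Complex.normSq (ψ (fun i => if h : i = r then v else b ⟨i, h⟩)) ≤ nsq ψ := by
    intro v
    refine sum_comp_le (fun b : {i // i ≠ r} → Fin 2 =>
      (fun i => if h : i = r then v else b ⟨i, h⟩))
      ?_ (fun x => Complex.normSq (ψ x)) (fun x => Complex.normSq_nonneg _)
      Finset.univ (fun b => Finset.mem_univ _)
    intro b b' hbb
    funext j
    have h1 := congrFun hbb j.1
    dsimp only at h1
    rw [dif_neg j.2, dif_neg j.2] at h1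
    exact h1
  have hterm : ∀ b : {i // i ≠ r} → Fin 2,
      Complex.normSq (collapse ψ r ξ b)
        ≤ 2 * Complex.normSq (ψ (fun i => if h : i = r then 0 else b ⟨i, h⟩))
          + 2 * Complex.normSq (ψ (fun i => if h : i = r then 1 else b ⟨i, h⟩)) := by
    intro b
    unfold collapse
    rw [Fin.sum_univ_two]
    refine (normSq_add_le _ _).trans ?_
    rw [Complex.normSq_mul, Complex.normSq_mul]
    have h0 : Complex.normSq (ξ 0) ≤ 1 := by
      rw [← Complex.sq_norm]; nlinarith [hξ 0, norm_nonneg (ξ 0)]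
    have h1 : Complex.normSq (ξ 1) ≤ 1 := by
      rw [← Complex.sq_norm]; nlinarith [hξ 1, norm_nonneg (ξ 1)]
    have n0 := Complex.normSq_nonneg (ψ (fun i => if h : i = r then 0 else b ⟨i, h⟩))
    have n1 := Complex.normSq_nonneg (ψ (fun i => if h : i = r then 1 else b ⟨i, h⟩))
    nlinarith
  calc nsq (collapse ψ r ξ)
      ≤ ∑ b : {i // i ≠ r} → Fin 2,
          (2 * Complex.normSq (ψ (fun i => if h : i = r then 0 else b ⟨i, h⟩))
            + 2 * Complex.normSq (ψ (fun i => if h : i = r then 1 else b ⟨i, h⟩))) :=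
        Finset.sum_le_sum fun b _ => hterm b
    _ ≤ 4 * nsq ψ := by
        rw [Finset.sum_add_distrib, ← Finset.mul_sum, ← Finset.mul_sum]
        have := hsub 0
        have := hsub 1
        nlinarith [hsub 0, hsub 1]

lemma xiUp_abs_le (θ φ : ℝ) : ∀ v : Fin 2, ‖xiUp θ φ v‖ ≤ 1 := by
  intro v
  fin_cases v
  · show ‖xiUp θ φ 0‖ ≤ 1
    rw [xiUp, Matrix.cons_val_zero, Complex.norm_real, Real.norm_eq_abs]
    exact Real.abs_cos_le_one _
  · show ‖xiUp θ φ 1‖ ≤ 1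
    rw [xiUp, Matrix.cons_val_one, Matrix.cons_val_zero, norm_mul,
      Complex.norm_exp_ofReal_mul_I, one_mul, Complex.norm_real, Real.norm_eq_abs]
    exact Real.abs_sin_le_one _

lemma xiDn_abs_le (θ φ : ℝ) : ∀ v : Fin 2, ‖xiDn θ φ v‖ ≤ 1 := by
  intro v
  fin_cases v
  · show ‖xiDn θ φ 0‖ ≤ 1
    have he : ‖Complex.exp (-(↑φ * Complex.I))‖ = 1 := by
      rw [show -((φ:ℂ) * Complex.I) = ((-φ : ℝ) : ℂ) * Complex.I by push_cast; ring,
        Complex.norm_exp_ofReal_mul_I]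
    rw [xiDn, Matrix.cons_val_zero, norm_mul, norm_neg, he, one_mul,
      Complex.norm_real, Real.norm_eq_abs]
    exact Real.abs_sin_le_one _
  · show ‖xiDn θ φ 1‖ ≤ 1
    rw [xiDn, Matrix.cons_val_one, Matrix.cons_val_zero, Complex.norm_real, Real.norm_eq_abs]
    exact Real.abs_cos_le_one _

lemma avgGGM_le {ι : Type} [Fintype ι] [DecidableEq ι] (ψ : PureState ι) (r : ι)
    (hcard : 1 < Fintype.card {i : ι // i ≠ r}) (θ φ : ℝ) :
    avgGGM ψ r θ φ ≤ 8 * nsq ψ := by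
  have hne := nonempty_bipartitions (J := {i : ι // i ≠ r}) hcard
  have g1 : GGM (normalize (collapse ψ r (xiUp θ φ))) ≤ 1 := GGM_le_one _ hne
  have g2 : GGM (normalize (collapse ψ r (xiDn θ φ))) ≤ 1 := GGM_le_one _ hne
  have g1' : 0 ≤ GGM (normalize (collapse ψ r (xiUp θ φ))) :=
    GGM_nonneg _ (nsq_normalize_le_one _) hne
  have g2' : 0 ≤ GGM (normalize (collapse ψ r (xiDn θ φ))) :=
    GGM_nonneg _ (nsq_normalize_le_one _) hne
  have n1 : nsq (collapse ψ r (xiUp θ φ)) ≤ 4 * nsq ψ :=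
    nsq_collapse_le ψ r _ (xiUp_abs_le θ φ)
  have n2 : nsq (collapse ψ r (xiDn θ φ)) ≤ 4 * nsq ψ :=
    nsq_collapse_le ψ r _ (xiDn_abs_le θ φ)
  have n1' : 0 ≤ nsq (collapse ψ r (xiUp θ φ)) :=
    Finset.sum_nonneg fun x _ => Complex.normSq_nonneg _
  have n2' : 0 ≤ nsq (collapse ψ r (xiDn θ φ)) :=
    Finset.sum_nonneg fun x _ => Complex.normSq_nonneg _
  unfold avgGGM
  nlinarith

end Aux5
section Aux6
variable {ι : Type} [Fintype ι] [DecidableEq ι]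

lemma sum_split (r : ι) (f : ι → ℂ) :
    ∑ i, f i = f r + ∑ i : {i // i ≠ r}, f i.1 := by
  rw [← Finset.add_sum_erase Finset.univ f (Finset.mem_univ r)]
  congr 1
  exact Finset.sum_subtype (Finset.univ.erase r)
    (by intro x; simp [Finset.mem_erase]) f

lemma xiUp_zero : xiUp 0 0 = ![1, 0] := by
  unfold xiUp
  norm_num

lemma xiDn_zero : xiDn 0 0 = ![0, 1] := by
  unfold xiDn
  norm_num

lemma collapse_up_zero (a : ι → ℂ) (r : ι) :
    collapse (wState a) r (xiUp 0 0) = wState (fun i : {i // i ≠ r} => a i.1) := by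
  funext b
  rw [collapse, xiUp_zero, Fin.sum_univ_two]
  rw [show ((![1, 0] : Fin 2 → ℂ) 0) = 1 from rfl, show ((![1, 0] : Fin 2 → ℂ) 1) = 0 from rfl]
  rw [one_mul, zero_mul, add_zero]
  -- now evaluate the W state at the configuration with qubit r set to 0
  have hcond : ∀ i : {i // i ≠ r},
      ((fun j => if h : j = r then (0 : Fin 2) else b ⟨j, h⟩) = basisVec i.1)
        ↔ (b = basisVec i) := by
    intro i
    constructor
    · intro hh
      funext j
      have h1 := congrFun hh j.1
      rw [dif_neg j.2] at h1
      rw [h1]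
      simp [basisVec, Subtype.ext_iff]
    · intro hh
      funext j
      by_cases hj : j = r
      · subst hj
        rw [dif_pos rfl, basisVec, if_neg (fun hh' => i.2 hh'.symm)]
      · rw [dif_neg hj]
        have h1 := congrFun hh ⟨j, hj⟩
        rw [h1]
        simp [basisVec, Subtype.ext_iff]
  rw [wState, sum_split r]
  have hr : ((fun j => if h : j = r then (0 : Fin 2) else b ⟨j, h⟩) = basisVec r) → False := by
    intro hh
    have h1 := congrFun hh r
    rw [dif_pos rfl] at h1
    simp [basisVec] at h1
  rw [if_neg hr, zero_add]
  exact Finset.sum_congr rfl fun i _ => if_congr (hcond i) rfl rfl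

lemma collapse_dn_zero (a : ι → ℂ) (r : ι) :
    collapse (wState a) r (xiDn 0 0)
      = fun b => if b = (fun _ => 0) then a r else 0 := by
  funext b
  rw [collapse, xiDn_zero, Fin.sum_univ_two]
  rw [show ((![0, 1] : Fin 2 → ℂ) 0) = 0 from rfl, show ((![0, 1] : Fin 2 → ℂ) 1) = 1 from rfl]
  rw [zero_mul, one_mul, zero_add]
  rw [wState, sum_split r]
  have hr : ((fun j => if h : j = r then (1 : Fin 2) else b ⟨j, h⟩) = basisVec r)
      ↔ (b = fun _ => 0) := by
    constructor
    · intro hh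
      funext j
      have h1 := congrFun hh j.1
      rw [dif_neg j.2] at h1
      rw [h1, basisVec, if_neg j.2]
    · intro hh
      funext j
      by_cases hj : j = r
      · subst hj
        rw [dif_pos rfl, basisVec, if_pos rfl]
      · rw [dif_neg hj, hh, basisVec, if_neg hj]
  have hrest : ∑ i : {i // i ≠ r},
      (if (fun j => if h : j = r then (1 : Fin 2) else b ⟨j, h⟩) = basisVec i.1
        then a i.1 else 0) = 0 := by
    refine Finset.sum_eq_zero fun i _ => ?_
    refine if_neg fun hh => ?_
    have h1 := congrFun hh r
    rw [dif_pos rfl, basisVec, if_neg (fun hh' => i.2 hh'.symm)] at h1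
    exact absurd h1 (by decide)
  rw [hrest, add_zero, if_congr hr rfl rfl]

lemma nsq_indicator {κ : Type} [Fintype κ] [DecidableEq κ] (c : ℂ) (z : κ → Fin 2)
    (f : (κ → Fin 2) → ℂ) (hf : f = fun b => if b = z then c else 0) :
    (∑ b : κ → Fin 2, Complex.normSq (f b)) = Complex.normSq c := by
  subst hf
  simp [apply_ite Complex.normSq, Finset.sum_ite_eq']

lemma normalize_wState (c : ι → ℂ) :
    normalize (wState c)
      = wState (fun i => c i / (Real.sqrt (nsq (wState c)) : ℂ)) := by
  funext x
  rw [normalize, wState, wState, Finset.sum_div]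
  refine Finset.sum_congr rfl fun i _ => ?_
  split <;> simp

end Aux6

lemma nsq_nonneg {ι : Type} [Fintype ι] [DecidableEq ι] (ψ : PureState ι) : 0 ≤ nsq ψ :=
  Finset.sum_nonneg fun x _ => Complex.normSq_nonneg _

/-- For any `N`-qubit generalized W state, the LGGM under single-qubit
projective measurement on any qubit `r` is at least the GGM
`minᵢ |aᵢ|²` of the original state. -/
theorem stmt9 (N : ℕ) (hN : 3 ≤ N) (a : Fin N → ℂ)
    (h : ∑ i, Complex.normSq (a i) = 1) (r : Fin N) :
    (⨅ i, Complex.normSq (a i)) ≤ LGGM (wState a) r := by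
  -- the remaining qubits admit nonempty proper bipartitions
  have hcard : 1 < Fintype.card {i : Fin N // i ≠ r} := by
    have h1 : 1 < (Finset.univ.erase r).card := by
      rw [Finset.card_erase_of_mem (Finset.mem_univ r), Finset.card_univ, Fintype.card_fin]
      omega
    obtain ⟨x, hx, y, hy, hxy⟩ := Finset.one_lt_card.mp h1
    refine Fintype.one_lt_card_iff.mpr
      ⟨⟨x, (Finset.mem_erase.mp hx).1⟩, ⟨y, (Finset.mem_erase.mp hy).1⟩, ?_⟩
    exact fun hc => hxy (Subtype.ext_iff.mp hc)
  have hbddm : BddBelow (Set.range fun i => Complex.normSq (a i)) :=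
    ⟨0, by rintro _ ⟨i, rfl⟩; exact Complex.normSq_nonneg _⟩
  have hmle : ∀ i, (⨅ i, Complex.normSq (a i)) ≤ Complex.normSq (a i) :=
    fun i => ciInf_le hbddm i
  have hbdd : BddAbove {E | ∃ θ ∈ Set.Icc 0 Real.pi, ∃ φ ∈ Set.Ico 0 (2 * Real.pi),
      E = avgGGM (wState a) r θ φ} := by
    refine ⟨8 * nsq (wState a), ?_⟩
    rintro E ⟨θ, hθ, φ, hφ, rfl⟩
    exact avgGGM_le (wState a) r hcard θ φ
  have hmem : avgGGM (wState a) r 0 0 ∈ {E | ∃ θ ∈ Set.Icc 0 Real.pi,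
      ∃ φ ∈ Set.Ico 0 (2 * Real.pi), E = avgGGM (wState a) r θ φ} :=
    ⟨0, ⟨le_refl 0, Real.pi_pos.le⟩, 0, ⟨le_refl 0, by positivity⟩, rfl⟩
  refine le_trans ?_ (le_csSup hbdd hmem)
  rw [avgGGM, collapse_up_zero, collapse_dn_zero]
  -- the two post-measurement branches
  have hterm2 : 0 ≤ nsq (fun b => if b = (fun _ => 0) then a r else 0 :
        PureState {i : Fin N // i ≠ r})
      * GGM (normalize (fun b => if b = (fun _ => 0) then a r else 0 :
        PureState {i : Fin N // i ≠ r})) :=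
    mul_nonneg (nsq_nonneg _)
      (GGM_nonneg _ (nsq_normalize_le_one _) (nonempty_bipartitions hcard))
  have hS_eq : nsq (wState (fun i : {i : Fin N // i ≠ r} => a i.1))
      = ∑ i : {i : Fin N // i ≠ r}, Complex.normSq (a i.1) :=
    nsq_wState _
  have hS0 : 0 ≤ nsq (wState (fun i : {i : Fin N // i ≠ r} => a i.1)) := nsq_nonneg _
  by_cases hS : nsq (wState (fun i : {i : Fin N // i ≠ r} => a i.1)) = 0
  · -- degenerate branch: all amplitudes off r vanish, so the infimum is ≤ 0
    have hone : Nonempty {i : Fin N // i ≠ r} := by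
      rcases Fintype.exists_pair_of_one_lt_card hcard with ⟨x, _, _⟩
      exact ⟨x⟩
    obtain ⟨j0⟩ := hone
    have hz : Complex.normSq (a j0.1) = 0 := by
      have := hS_eq ▸ hS
      have h0 := (Finset.sum_eq_zero_iff_of_nonneg
        (fun i _ => Complex.normSq_nonneg _)).mp this j0 (Finset.mem_univ j0)
      exact h0
    have : (⨅ i, Complex.normSq (a i)) ≤ 0 := hz ▸ hmle j0.1
    rw [hS, zero_mul, zero_add]
    linarith
  · have hSpos : 0 < nsq (wState (fun i : {i : Fin N // i ≠ r} => a i.1)) :=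
      lt_of_le_of_ne hS0 (Ne.symm hS)
    rw [normalize_wState]
    set S := nsq (wState (fun i : {i : Fin N // i ≠ r} => a i.1)) with hSdef
    have hnormd : ∀ i : {i : Fin N // i ≠ r},
        Complex.normSq (a i.1 / ((Real.sqrt S : ℝ) : ℂ))
          = Complex.normSq (a i.1) / S := by
      intro i
      rw [Complex.normSq_div, Complex.normSq_ofReal, Real.mul_self_sqrt hSpos.le]
    have hd1 : ∑ i : {i : Fin N // i ≠ r},
        Complex.normSq (a i.1 / ((Real.sqrt S : ℝ) : ℂ)) = 1 := by
      rw [Finset.sum_congr rfl fun i _ => hnormd i, ← Finset.sum_div, ← hS_eq]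
      exact div_self hS
    have hge : (⨅ i, Complex.normSq (a i)) / S
        ≤ GGM (wState (fun i : {i : Fin N // i ≠ r} =>
            a i.1 / ((Real.sqrt S : ℝ) : ℂ))) := by
      refine GGM_wState_ge _ hd1 hcard _ fun i => ?_
      rw [hnormd i]
      exact div_le_div_of_nonneg_right (hmle i.1) hSpos.le
    have hkey : (⨅ i, Complex.normSq (a i))
        ≤ S * GGM (wState (fun i : {i : Fin N // i ≠ r} =>
            a i.1 / ((Real.sqrt S : ℝ) : ℂ))) := by
      have := mul_le_mul_of_nonneg_left hge hSpos.le
      calc (⨅ i, Complex.normSq (a i)) = S * ((⨅ i, Complex.normSq (a i)) / S) := by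
            field_simp
        _ ≤ _ := this
    linarith


end QI
end
end
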